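/- arXiv:1906.02233 — 4 statements merged into one kernel-verified Lean document; each statement's English description precedes it below -/
import Mathlib

section
/- Let f : ℂ → ℂ be an entire function whose Taylor coefficients c_k := f^{(k)}(0)/k! satisfy limsup_{n→∞} n·|c_n|^{2/n} = 0 (equivalently, the order of f is at most 2, with minimal type in the case the order equals 2). Then for every (t, z) ∈ ℂ × ℂ the series F(t, z) := Σ_{j≥0} f^{(2j)}(z)·t^j/j! converges absolutely, the resulting function F is analytic on all of ℂ², it satisfies the heat equation ∂_t F(t,z) = ∂_z² F(t,z) for all (t,z) ∈ ℂ², and F(0, z) = f(z) for all z ∈ ℂ. -/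
open Filter MeasureTheory

set_option maxHeartbeats 1000000
section HeatAuxSection
namespace HeatAux
open Filter

noncomputable def ee (f : ℂ → ℂ) (m k : ℕ) : ℂ := iteratedDeriv (m + k) f 0 / (k.factorial : ℂ)

/-- iterated derivative of iterated derivative -/
lemma itd_itd : ∀ (m k : ℕ) (f : ℂ → ℂ), iteratedDeriv k (iteratedDeriv m f) = iteratedDeriv (m + k) f := by
  intro m
  induction m with
  | zero => intro k f; simp [iteratedDeriv_zero]
  | succ m ih =>
    intro k f
    have h1 : m + 1 + k = m + k + 1 := by omega
    rw [h1, iteratedDeriv_succ' (n := m), ih k (deriv f), ← iteratedDeriv_succ']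

lemma itd_diff {f : ℂ → ℂ} (hf : Differentiable ℂ f) (m : ℕ) :
    Differentiable ℂ (iteratedDeriv m f) := by
  induction m with
  | zero => simpa using hf
  | succ m ih =>
    rw [iteratedDeriv_succ]
    have := (Complex.analyticOnNhd_univ_iff_differentiable.mpr ih).deriv
    exact Complex.analyticOnNhd_univ_iff_differentiable.mp this

lemma hasSum_ee {f : ℂ → ℂ} (hf : Differentiable ℂ f) (m : ℕ) (z : ℂ) :
    HasSum (fun k => ee f m k * z ^ k) (iteratedDeriv m f z) := by
  have H := Complex.hasSum_taylorSeries_of_entire (itd_diff hf m) 0 z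
  refine H.congr_fun fun k => ?_
  rw [itd_itd m k f]
  simp [ee, smul_eq_mul]
  ring


/-- From the limsup hypothesis: eventual coefficient bound. -/
lemma coeff_bound {f : ℂ → ℂ}
    (h : Filter.limsup
        (fun n : ℕ =>
          (((n : ℝ) * ‖iteratedDeriv n f 0 / (n.factorial : ℂ)‖ ^ (2 / (n : ℝ)) : ℝ) :
            EReal))
        Filter.atTop = (0 : EReal)) {ε : ℝ} (hε : 0 < ε) :
    ∀ᶠ n in atTop, ‖iteratedDeriv n f 0 / (n.factorial : ℂ)‖ ≤ (ε / n) ^ ((n : ℝ) / 2) := by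
  have hlt : Filter.limsup
        (fun n : ℕ =>
          (((n : ℝ) * ‖iteratedDeriv n f 0 / (n.factorial : ℂ)‖ ^ (2 / (n : ℝ)) : ℝ) :
            EReal))
        Filter.atTop < (ε : EReal) := by
    rw [h]; exact_mod_cast EReal.coe_lt_coe_iff.mpr hε |>.trans_eq rfl
  have hev := Filter.eventually_lt_of_limsup_lt hlt
  filter_upwards [hev, Filter.eventually_ge_atTop 1] with n hn hn1
  set x : ℝ := ‖iteratedDeriv n f 0 / (n.factorial : ℂ)‖ with hx
  have hxabs : ‖iteratedDeriv n f 0 / (n.factorial : ℂ)‖ = x := rfl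
  have hnR : (0:ℝ) < n := by exact_mod_cast hn1
  have hreal : (n : ℝ) * x ^ (2 / (n:ℝ)) < ε := by exact_mod_cast hn
  have h2 : x ^ (2 / (n:ℝ)) ≤ ε / n := by
    rw [le_div_iff₀ hnR]
    nlinarith [Real.rpow_natCast x 0]
  have hx0 : (0:ℝ) ≤ x := norm_nonneg _
  have hexp : (2/(n:ℝ)) * ((n:ℝ)/2) = 1 := by field_simp
  calc x = (x ^ (2/(n:ℝ))) ^ ((n:ℝ)/2) := by
            rw [← Real.rpow_mul hx0, hexp, Real.rpow_one]
    _ ≤ (ε / n) ^ ((n:ℝ)/2) := Real.rpow_le_rpow (Real.rpow_nonneg hx0 _) h2 (by positivity)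

/-- factorial shift bound -/
lemma fact_le_pow_mul_fact : ∀ (s k : ℕ), (s + k).factorial ≤ (s + k) ^ s * k.factorial := by
  intro s
  induction s with
  | zero => simp
  | succ s ih =>
    intro k
    have h1 : s + 1 + k = (s + k) + 1 := by omega
    rw [h1, Nat.factorial_succ]
    calc (s + k + 1) * (s + k).factorial ≤ (s + k + 1) * ((s + k) ^ s * k.factorial) :=
          Nat.mul_le_mul_left _ (ih k)
      _ ≤ (s + k + 1) * ((s + k + 1) ^ s * k.factorial) := by
          exact Nat.mul_le_mul_left _ (Nat.mul_le_mul_right _ (Nat.pow_le_pow_left (by omega) s))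
      _ = (s + k + 1) ^ (s + 1) * k.factorial := by ring

lemma choose_le_two_pow (M j : ℕ) : M.choose j ≤ 2 ^ M := by
  rcases le_or_gt j M with hj | hj
  · calc M.choose j ≤ ∑ i ∈ Finset.range (M+1), M.choose i :=
        Finset.single_le_sum (fun i _ => Nat.zero_le _) (Finset.mem_range.mpr (by omega))
      _ = 2 ^ M := Nat.sum_range_choose M
  · simp [Nat.choose_eq_zero_of_lt hj]

/-- main Nat inequality:  M! ≤ 2^M * M^(j+q) * (j! * k!) where M = 2j+q+k -/
lemma fact_ineq (j q k : ℕ) :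
    (2*j+q+k).factorial ≤ 2 ^ (2*j+q+k) * (2*j+q+k) ^ (j+q) * (j.factorial * k.factorial) := by
  set M := 2*j+q+k with hM
  have hjM : j ≤ M := by omega
  have h1 : M.choose j * j.factorial * (M - j).factorial = M.factorial :=
    Nat.choose_mul_factorial_mul_factorial hjM
  have h2 : M - j = (j + q) + k := by omega
  calc M.factorial = M.choose j * j.factorial * (M - j).factorial := h1.symm
    _ ≤ 2 ^ M * j.factorial * (M - j).factorial := by
        exact Nat.mul_le_mul_right _ (Nat.mul_le_mul_right _ (choose_le_two_pow M j))
    _ ≤ 2 ^ M * j.factorial * ((j + q + k) ^ (j + q) * k.factorial) := by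
        rw [h2]; exact Nat.mul_le_mul_left _ (fact_le_pow_mul_fact (j+q) k)
    _ ≤ 2 ^ M * j.factorial * (M ^ (j + q) * k.factorial) := by
        refine Nat.mul_le_mul_left _ (Nat.mul_le_mul_right _ (Nat.pow_le_pow_left (by omega) _))
    _ = 2 ^ M * M ^ (j+q) * (j.factorial * k.factorial) := by ring


lemma key_bound {f : ℂ → ℂ}
    (hcb : ∀ ε : ℝ, 0 < ε → ∀ᶠ n in atTop,
      ‖iteratedDeriv n f 0 / (n.factorial : ℂ)‖ ≤ (ε / n) ^ ((n : ℝ) / 2))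
    {δ : ℝ} (hδ0 : 0 < δ) (hδ1 : δ ≤ 1) :
    ∃ C : ℝ, 0 < C ∧ ∀ j q k : ℕ, q ≤ 2 →
      ‖ee f (2*j+q) k‖ ≤ C * j.factorial * δ^(j+k) := by
  have hε : (0:ℝ) < δ^2/64 := by positivity
  set ε := δ^2/64 with hεdef
  obtain ⟨N, hN⟩ := Filter.eventually_atTop.mp (hcb ε hε)
  set N₀ := max N 1 with hN₀def
  have main : ∀ j q k : ℕ, q ≤ 2 → N₀ ≤ 2*j+q+k →
      ‖ee f (2*j+q) k‖ ≤ j.factorial * δ^(j+k) := by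
    intro j q k hq hM
    set M := 2*j+q+k with hMdef
    have hM1 : 1 ≤ M := le_trans (le_max_right N 1) hM
    have hMR : (1:ℝ) ≤ (M:ℝ) := by exact_mod_cast hM1
    have hMR0 : (0:ℝ) < (M:ℝ) := by linarith
    have hc : ‖iteratedDeriv M f 0 / (M.factorial:ℂ)‖ ≤ (ε/(M:ℝ))^((M:ℝ)/2) :=
      hN M (le_trans (le_max_left N 1) hM)
    have hfacM : (0:ℝ) < (M.factorial:ℝ) := by exact_mod_cast M.factorial_pos
    have hfack : (0:ℝ) < (k.factorial:ℝ) := by exact_mod_cast k.factorial_pos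
    have hfacj : (0:ℝ) < (j.factorial:ℝ) := by exact_mod_cast j.factorial_pos
    have hcval : ‖iteratedDeriv M f 0 / (M.factorial:ℂ)‖
        = ‖iteratedDeriv M f 0‖ / (M.factorial:ℝ) := by
      rw [norm_div]; norm_num
    have heq : ‖ee f (2*j+q) k‖ = ‖iteratedDeriv M f 0‖ / (k.factorial:ℝ) := by
      simp only [ee, ← hMdef, norm_div]; norm_num
    set A := ‖iteratedDeriv M f 0‖ with hAdef
    set c := A / (M.factorial:ℝ) with hcdef
    have hc' : c ≤ (ε/(M:ℝ))^((M:ℝ)/2) := by rwa [hcval] at hc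
    have hA : A = c * M.factorial := by rw [hcdef, div_mul_cancel₀ _ hfacM.ne']
    have hc0 : 0 ≤ c := by positivity
    have hfact : (M.factorial:ℝ) ≤ 2^M * (M:ℝ)^(j+q) * ((j.factorial:ℝ) * k.factorial) := by
      exact_mod_cast fact_ineq j q k
    have h3 : ‖ee f (2*j+q) k‖ ≤ c * 2^M * (M:ℝ)^(j+q) * j.factorial := by
      rw [heq, hA, div_le_iff₀ hfack]
      calc c * (M.factorial:ℝ) ≤ c * (2^M * (M:ℝ)^(j+q) * ((j.factorial:ℝ) * k.factorial)) :=
            mul_le_mul_of_nonneg_left hfact hc0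
        _ = c * 2^M * (M:ℝ)^(j+q) * j.factorial * k.factorial := by ring
    -- the rpow chain
    have e1 : (M:ℝ)^(j:ℕ) ≤ (M:ℝ)^((M:ℝ)/2) := by
      rw [← Real.rpow_natCast (M:ℝ) j]
      apply Real.rpow_le_rpow_of_exponent_le hMR
      have : (2*j : ℕ) ≤ M := by omega
      have : ((2*j : ℕ):ℝ) ≤ (M:ℝ) := by exact_mod_cast this
      push_cast at this; linarith
    have hM2 : (M:ℝ) ≤ 2^M := by
      have := Nat.lt_two_pow_self (n := M)
      exact_mod_cast this.le
    have e2 : (M:ℝ)^(q:ℕ) ≤ 4^M := by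
      calc (M:ℝ)^q ≤ (M:ℝ)^2 := pow_le_pow_right₀ hMR hq
        _ ≤ ((2:ℝ)^M)^2 := pow_le_pow_left₀ (by positivity) hM2 2
        _ = 4^M := by rw [← pow_mul, mul_comm, pow_mul]; norm_num
    have e3 : (ε/(M:ℝ))^((M:ℝ)/2) * (M:ℝ)^((M:ℝ)/2) = ε^((M:ℝ)/2) := by
      rw [← Real.mul_rpow (by positivity) (by positivity), div_mul_cancel₀]
      exact ne_of_gt hMR0
    have e4 : ε^((M:ℝ)/2) = (δ/8)^(M:ℕ) := by
      have hεeq : ε = (δ/8)^(2:ℕ) := by rw [hεdef]; ring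
      rw [hεeq, ← Real.rpow_natCast (δ/8) 2, ← Real.rpow_mul (by positivity)]
      rw [show ((2:ℕ):ℝ) * ((M:ℝ)/2) = (M:ℝ) by push_cast; ring, Real.rpow_natCast]
    have e5 : (δ/8)^(M:ℕ) * 8^M = δ^M := by
      rw [div_pow, div_mul_cancel₀]
      positivity
    have key : c * 2^M * (M:ℝ)^(j+q) ≤ δ^(j+k) := by
      have hup : c * 2^M * (M:ℝ)^(j+q) ≤ ((ε/(M:ℝ))^((M:ℝ)/2) * (M:ℝ)^((M:ℝ)/2)) * (2^M * 4^M) := by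
        rw [pow_add (M:ℝ) j q]
        calc c * 2^M * ((M:ℝ)^(j:ℕ) * (M:ℝ)^(q:ℕ))
            ≤ (ε/(M:ℝ))^((M:ℝ)/2) * 2^M * ((M:ℝ)^((M:ℝ)/2) * 4^M) := by
              apply mul_le_mul (mul_le_mul hc' le_rfl (by positivity) (by positivity))
                (mul_le_mul e1 e2 (by positivity) (by positivity)) (by positivity)
              positivity
          _ = ((ε/(M:ℝ))^((M:ℝ)/2) * (M:ℝ)^((M:ℝ)/2)) * (2^M * 4^M) := by ring
      rw [e3] at hup
      have h8 : (2:ℝ)^M * 4^M = 8^M := by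
        rw [← mul_pow]; norm_num
      rw [h8] at hup
      rw [e4, e5] at hup
      calc c * 2^M * (M:ℝ)^(j+q) ≤ δ^M := hup
        _ ≤ δ^(j+k) := pow_le_pow_of_le_one hδ0.le hδ1 (by omega)
    calc ‖ee f (2*j+q) k‖ ≤ c * 2^M * (M:ℝ)^(j+q) * j.factorial := h3
      _ ≤ δ^(j+k) * j.factorial := mul_le_mul_of_nonneg_right key hfacj.le
      _ = (j.factorial:ℝ) * δ^(j+k) := by ring
  -- now assemble with a constant covering the finitely many exceptions
  classical
  set S : ℝ := ∑ p ∈ (Finset.range N₀ ×ˢ Finset.range 3) ×ˢ Finset.range N₀,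
      ‖ee f (2*p.1.1+p.1.2) p.2‖ / ((p.1.1.factorial : ℝ) * δ^(p.1.1+p.2)) with hSdef
  have hS0 : 0 ≤ S := Finset.sum_nonneg fun p _ => by positivity
  refine ⟨1 + S, by linarith, ?_⟩
  intro j q k hq
  have hd : (0:ℝ) < (j.factorial:ℝ) * δ^(j+k) := by positivity
  rcases le_or_gt N₀ (2*j+q+k) with hge | hlt
  · have := main j q k hq hge
    nlinarith [norm_nonneg (ee f (2*j+q) k)]
  · have hj : j < N₀ := by omega
    have hk : k < N₀ := by omega
    have hq3 : q < 3 := by omega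
    have hmem : ((j,q),k) ∈ (Finset.range N₀ ×ˢ Finset.range 3) ×ˢ Finset.range N₀ := by
      simp [Finset.mem_product, hj, hk, hq3]
    have hterm0 := Finset.single_le_sum (f := fun p : (ℕ×ℕ)×ℕ => ‖ee f (2*p.1.1+p.1.2) p.2‖ /
        ((p.1.1.factorial : ℝ) * δ^(p.1.1+p.2))) (fun p _ => by positivity) hmem
    have hterm : ‖ee f (2*j+q) k‖ / ((j.factorial : ℝ) * δ^(j+k)) ≤ S := by
      rw [hSdef]; simpa using hterm0
    rw [div_le_iff₀ hd] at hterm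
    calc ‖ee f (2*j+q) k‖ ≤ S * ((j.factorial:ℝ) * δ^(j+k)) := hterm
      _ ≤ (1+S) * ((j.factorial:ℝ) * δ^(j+k)) := mul_le_mul_of_nonneg_right (by linarith) hd.le
      _ = (1+S) * (j.factorial:ℝ) * δ^(j+k) := by ring


variable {f : ℂ → ℂ}
  (hcb : ∀ ε : ℝ, 0 < ε → ∀ᶠ n in atTop,
      ‖iteratedDeriv n f 0 / (n.factorial : ℂ)‖ ≤ (ε / n) ^ ((n : ℝ) / 2))

include hcb in
lemma summable_prod {q : ℕ} (hq : q ≤ 2) {r₁ r₂ : ℝ} (h1 : 0 ≤ r₁) (h2 : 0 ≤ r₂) :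
    Summable (fun p : ℕ × ℕ =>
      ‖ee f (2*p.1+q) p.2‖ / p.1.factorial * (r₁^p.1 * r₂^p.2)) := by
  set r := max r₁ r₂ with hrdef
  have hr0 : 0 ≤ r := le_trans h1 (le_max_left _ _)
  set δ := min 1 (1/(2*(r+1))) with hδdef
  have hδ0 : 0 < δ := lt_min one_pos (by positivity)
  have hδ1 : δ ≤ 1 := min_le_left _ _
  obtain ⟨C, hC0, hC⟩ := key_bound hcb hδ0 hδ1
  have hhalf : ∀ s : ℝ, 0 ≤ s → s ≤ r → δ * s ≤ 1/2 := by
    intro s hs0 hsr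
    have h1' : δ ≤ 1/(2*(r+1)) := min_le_right _ _
    have : δ * s ≤ (1/(2*(r+1))) * r :=
      mul_le_mul h1' hsr hs0 (by positivity)
    have : (1/(2*(r+1))) * r ≤ 1/2 := by
      rw [div_mul_eq_mul_div, div_le_div_iff₀ (by positivity) (by norm_num)]
      nlinarith
    linarith [mul_le_mul h1' hsr hs0 (le_of_lt (by positivity : (0:ℝ) < 1/(2*(r+1))))]
  refine Summable.of_nonneg_of_le (f := fun p : ℕ × ℕ => C * ((1/2)^p.1 * (1/2)^p.2))
    (fun p => by positivity) ?_ ?_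
  · rintro ⟨j, k⟩
    have hb := hC j q k hq
    have hfj : (0:ℝ) < j.factorial := by exact_mod_cast j.factorial_pos
    have h4 : ‖ee f (2*j+q) k‖ / j.factorial ≤ C * δ^(j+k) := by
      rw [div_le_iff₀ hfj]
      calc ‖ee f (2*j+q) k‖ ≤ C * j.factorial * δ^(j+k) := hb
        _ = C * δ^(j+k) * j.factorial := by ring
    calc ‖ee f (2*j+q) k‖ / j.factorial * (r₁^j * r₂^k)
        ≤ (C * δ^(j+k)) * (r₁^j * r₂^k) := by
          apply mul_le_mul_of_nonneg_right h4 (by positivity)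
      _ = C * ((δ*r₁)^j * (δ*r₂)^k) := by rw [pow_add, mul_pow, mul_pow]; ring
      _ ≤ C * ((1/2)^j * (1/2)^k) := by
          apply mul_le_mul_of_nonneg_left _ hC0.le
          apply mul_le_mul (pow_le_pow_left₀ (by positivity) (hhalf r₁ h1 (le_max_left _ _)) j)
            (pow_le_pow_left₀ (by positivity) (hhalf r₂ h2 (le_max_right _ _)) k)
            (by positivity) (by positivity)
  · exact ((summable_geometric_of_lt_one (by norm_num) (by norm_num)).mul_of_nonneg
      (summable_geometric_of_lt_one (by norm_num) (by norm_num))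
      (fun _ => by positivity) (fun _ => by positivity)).mul_left C

include hcb in
lemma summable_fiber {q : ℕ} (hq : q ≤ 2) (j : ℕ) {R : ℝ} (hR : 0 ≤ R) :
    Summable (fun k => ‖ee f (2*j+q) k‖ * R^k) := by
  have h := ((summable_prod hcb hq (zero_le_one) hR).prod_factor j).mul_left (j.factorial : ℝ)
  refine h.congr fun k => ?_
  have hfj : (j.factorial:ℝ) ≠ 0 := by positivity
  field_simp
  simp

include hcb in
lemma norm_itd_le (hf : Differentiable ℂ f) {q : ℕ} (hq : q ≤ 2) (j : ℕ) {w : ℂ} {R : ℝ}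
    (hw : ‖w‖ ≤ R) :
    ‖iteratedDeriv (2*j+q) f w‖ ≤ ∑' k, ‖ee f (2*j+q) k‖ * R^k := by
  have hR : 0 ≤ R := le_trans (norm_nonneg _) hw
  have hs := hasSum_ee hf (2*j+q) w
  have hsum1 : Summable (fun k => ‖ee f (2*j+q) k * w^k‖) := by
    apply Summable.of_nonneg_of_le (fun k => norm_nonneg _) _ (summable_fiber hcb hq j hR)
    intro k
    rw [norm_mul, norm_pow]
    exact mul_le_mul_of_nonneg_left (pow_le_pow_left₀ (norm_nonneg _) hw k) (norm_nonneg _)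
  rw [← hs.tsum_eq]
  calc ‖∑' k, ee f (2*j+q) k * w^k‖ ≤ ∑' k, ‖ee f (2*j+q) k * w^k‖ :=
        norm_tsum_le_tsum_norm hsum1
    _ ≤ ∑' k, ‖ee f (2*j+q) k‖ * R^k := by
        apply Summable.tsum_le_tsum _ hsum1 (summable_fiber hcb hq j hR)
        intro k
        rw [norm_mul, norm_pow]
        exact mul_le_mul_of_nonneg_left (pow_le_pow_left₀ (norm_nonneg _) hw k) (norm_nonneg _)

include hcb in
lemma summable_norm_term {q : ℕ} (hq : q ≤ 2) (t z : ℂ) :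
    Summable (fun p : ℕ × ℕ =>
      ‖ee f (2*p.1+q) p.2 * z^p.2 * t^p.1 / p.1.factorial‖) := by
  refine (summable_prod hcb hq (norm_nonneg t) (norm_nonneg z)).congr fun p => ?_
  rw [norm_div, norm_mul, norm_mul, norm_pow, norm_pow]
  have : ‖(p.1.factorial : ℂ)‖ = (p.1.factorial : ℝ) := by
    rw [Complex.norm_natCast]
  rw [this]
  ring

lemma hasSum_fiber (hf : Differentiable ℂ f) (q j : ℕ) (t z : ℂ) :
    HasSum (fun k => ee f (2*j+q) k * z^k * t^j / j.factorial)
      (iteratedDeriv (2*j+q) f z * t^j / j.factorial) := by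
  have h := (hasSum_ee hf (2*j+q) z).mul_right (t^j / (j.factorial:ℂ))
  simpa only [mul_div_assoc] using h

include hcb in
lemma hasSum_outer (hf : Differentiable ℂ f) {q : ℕ} (hq : q ≤ 2) (t z : ℂ) :
    HasSum (fun j => iteratedDeriv (2*j+q) f z * t^j / (j.factorial:ℂ))
      (∑' p : ℕ × ℕ, ee f (2*p.1+q) p.2 * z^p.2 * t^p.1 / p.1.factorial) :=
  ((summable_norm_term hcb hq t z).of_norm.hasSum).prod_fiberwise
    (fun j => hasSum_fiber hf q j t z)


include hcb in
lemma claim1 (hf : Differentiable ℂ f) (t z : ℂ) :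
    Summable fun j : ℕ => ‖iteratedDeriv (2 * j) f z * t ^ j / (j.factorial : ℂ)‖ := by
  have hsn := summable_norm_term hcb (q := 0) (by norm_num) t z
  have hmaj : Summable (fun j : ℕ => ∑' k, ‖ee f (2*j+0) k * z^k * t^j / (j.factorial:ℂ)‖) :=
    (hsn.hasSum.prod_fiberwise (fun j => (hsn.prod_factor j).hasSum)).summable
  refine Summable.of_nonneg_of_le (fun j => norm_nonneg _) (fun j => ?_) hmaj
  have hfib := hasSum_fiber hf 0 j t z
  rw [show (2*j : ℕ) = 2*j+0 from rfl, ← hfib.tsum_eq]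
  exact norm_tsum_le_tsum_norm (hsn.prod_factor j)

lemma claim4 (f : ℂ → ℂ) (z : ℂ) :
    (∑' j : ℕ, iteratedDeriv (2 * j) f z * (0 : ℂ) ^ j / (j.factorial : ℂ)) = f z := by
  rw [tsum_eq_single 0 (fun j hj => by rw [zero_pow hj]; simp)]
  simp


include hcb in
/-- differentiation in t -/
lemma deriv_t (hf : Differentiable ℂ f) (t z : ℂ) :
    deriv (fun s => ∑' j : ℕ, iteratedDeriv (2*j) f z * s^j / (j.factorial:ℂ)) t
      = ∑' j : ℕ, iteratedDeriv (2*j+2) f z * t^j / (j.factorial:ℂ) := by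
  set R : ℝ := ‖t‖ + 1 with hRdef
  have hu : Summable (fun j => ‖iteratedDeriv (2*j) f z * ((R:ℂ))^j / (j.factorial:ℂ)‖) :=
    claim1 hcb hf (R:ℂ) z
  have hdiff : ∀ j : ℕ, DifferentiableOn ℂ
      (fun s : ℂ => iteratedDeriv (2*j) f z * s^j / (j.factorial:ℂ)) (Metric.ball 0 R) :=
    fun j => (((differentiable_pow j).const_mul _).div_const _).differentiableOn
  have hbound : ∀ (j : ℕ) (w : ℂ), w ∈ Metric.ball (0:ℂ) R →
      ‖iteratedDeriv (2*j) f z * w^j / (j.factorial:ℂ)‖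
        ≤ ‖iteratedDeriv (2*j) f z * ((R:ℂ))^j / (j.factorial:ℂ)‖ := by
    intro j w hw
    rw [Metric.mem_ball, dist_zero_right] at hw
    have hR0 : (0:ℝ) ≤ R := by positivity
    rw [norm_div, norm_div, norm_mul, norm_mul, norm_pow, norm_pow, Complex.norm_real]
    rw [Real.norm_of_nonneg hR0]
    gcongr
  have hz : t ∈ Metric.ball (0:ℂ) R := by
    rw [Metric.mem_ball, dist_zero_right, hRdef]; linarith
  have HS := Complex.hasSum_deriv_of_summable_norm hu hdiff Metric.isOpen_ball hbound hz
  have hderiv : ∀ (j : ℕ) (s : ℂ),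
      deriv (fun x : ℂ => iteratedDeriv (2*j) f z * x^j / (j.factorial:ℂ)) s
        = iteratedDeriv (2*j) f z * ((j:ℂ) * s^(j-1)) / (j.factorial:ℂ) := by
    intro j s
    rw [deriv_div_const, deriv_const_mul _ (differentiable_pow j).differentiableAt, deriv_pow_field]
  have h0 : deriv (fun x : ℂ => iteratedDeriv (2*0) f z * x^0 / ((0:ℕ).factorial:ℂ)) t = 0 := by
    rw [hderiv]; simp
  have HS1 := (hasSum_nat_add_iff' 1).mpr HS
  rw [Finset.sum_range_one, h0, sub_zero] at HS1
  have hsh : ∀ j : ℕ,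
      deriv (fun x : ℂ => iteratedDeriv (2*(j+1)) f z * x^(j+1) / ((j+1).factorial:ℂ)) t
        = iteratedDeriv (2*j+2) f z * t^j / (j.factorial:ℂ) := by
    intro j
    rw [hderiv]
    have h2 : 2*(j+1) = 2*j+2 := by ring
    rw [h2, Nat.factorial_succ]
    have hj1 : ((j:ℂ)+1) ≠ 0 := Nat.cast_add_one_ne_zero j
    have hjf : ((j.factorial:ℂ)) ≠ 0 := Nat.cast_ne_zero.mpr (Nat.factorial_ne_zero j)
    push_cast
    field_simp
  have HS2 := HS1.congr_fun (fun j => (hsh j).symm)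
  exact HS2.tsum_eq.symm

include hcb in
/-- differentiation in z, one stage -/
lemma stage (hf : Differentiable ℂ f) {q : ℕ} (hq : q + 1 ≤ 2) (t : ℂ) {R : ℝ} {w : ℂ}
    (hw : w ∈ Metric.ball (0:ℂ) R) :
    deriv (fun x => ∑' j : ℕ, iteratedDeriv (2*j+q) f x * t^j / (j.factorial:ℂ)) w
      = ∑' j : ℕ, iteratedDeriv (2*j+(q+1)) f w * t^j / (j.factorial:ℂ) := by
  have hq2 : q ≤ 2 := by omega
  have hR0 : 0 ≤ R := by
    have := Metric.mem_ball.mp hw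
    rw [dist_zero_right] at this
    linarith [norm_nonneg w]
  set u : ℕ → ℝ := fun j => (‖t‖^j / (j.factorial:ℝ)) * ∑' k, ‖ee f (2*j+q) k‖ * R^k with hudef
  have hsp := summable_prod hcb (f := f) hq2 (norm_nonneg t) hR0 (r₂ := R)
  have hu : Summable u := by
    refine (hsp.hasSum.prod_fiberwise (g := u) (fun j => ?_)).summable
    have heq : u j = ∑' k, ‖ee f (2*j+q) k‖ / (j.factorial:ℝ) * (‖t‖^j * R^k) := by
      simp only [hudef]
      rw [← tsum_mul_left]
      exact tsum_congr fun k => by ring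
    rw [heq]
    exact (hsp.prod_factor j).hasSum
  have hdiff : ∀ j : ℕ, DifferentiableOn ℂ
      (fun x : ℂ => iteratedDeriv (2*j+q) f x * t^j / (j.factorial:ℂ)) (Metric.ball 0 R) :=
    fun j => (((itd_diff hf (2*j+q)).mul_const _).div_const _).differentiableOn
  have hbound : ∀ (j : ℕ) (x : ℂ), x ∈ Metric.ball (0:ℂ) R →
      ‖iteratedDeriv (2*j+q) f x * t^j / (j.factorial:ℂ)‖ ≤ u j := by
    intro j x hx
    rw [Metric.mem_ball, dist_zero_right] at hx
    have hitd := norm_itd_le hcb hf hq2 j hx.le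
    rw [norm_div, norm_mul, norm_pow, Complex.norm_natCast]
    rw [hudef]
    have hfj : (0:ℝ) < (j.factorial:ℝ) := by exact_mod_cast j.factorial_pos
    rw [div_le_iff₀ hfj]
    have h1 : 0 ≤ ‖t‖^j := by positivity
    calc ‖iteratedDeriv (2*j+q) f x‖ * ‖t‖^j
        ≤ (∑' k, ‖ee f (2*j+q) k‖ * R^k) * ‖t‖^j :=
          mul_le_mul_of_nonneg_right hitd h1
      _ = ‖t‖^j / (j.factorial:ℝ) * (∑' k, ‖ee f (2*j+q) k‖ * R^k) * (j.factorial:ℝ) := by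
          field_simp
  have HS := Complex.hasSum_deriv_of_summable_norm hu hdiff Metric.isOpen_ball hbound hw
  have hder : ∀ j : ℕ,
      deriv (fun x : ℂ => iteratedDeriv (2*j+q) f x * t^j / (j.factorial:ℂ)) w
        = iteratedDeriv (2*j+(q+1)) f w * t^j / (j.factorial:ℂ) := by
    intro j
    rw [deriv_div_const, deriv_mul_const (itd_diff hf (2*j+q)).differentiableAt]
    rw [show 2*j+(q+1) = (2*j+q)+1 by ring, iteratedDeriv_succ]
  exact ((HS.congr_fun (fun j => (hder j).symm)).tsum_eq).symm


include hcb in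
lemma claim3 (hf : Differentiable ℂ f) (t z : ℂ) :
    deriv (fun s => ∑' j : ℕ, iteratedDeriv (2 * j) f z * s ^ j / (j.factorial : ℂ)) t =
      iteratedDeriv 2
        (fun w => ∑' j : ℕ, iteratedDeriv (2 * j) f w * t ^ j / (j.factorial : ℂ)) z := by
  rw [deriv_t hcb hf t z]
  have h2 : iteratedDeriv 2
      (fun w => ∑' j : ℕ, iteratedDeriv (2 * j) f w * t ^ j / (j.factorial : ℂ))
      = deriv (deriv (fun w => ∑' j : ℕ, iteratedDeriv (2 * j) f w * t ^ j / (j.factorial : ℂ))) := by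
    rw [iteratedDeriv_succ, iteratedDeriv_one]
  rw [h2]
  set R : ℝ := ‖z‖ + 1 with hRdef
  have hzR : z ∈ Metric.ball (0:ℂ) R := by
    rw [Metric.mem_ball, dist_zero_right, hRdef]; linarith
  have hEq : deriv (fun w => ∑' j : ℕ, iteratedDeriv (2 * j) f w * t ^ j / (j.factorial : ℂ))
      =ᶠ[nhds z] (fun w => ∑' j : ℕ, iteratedDeriv (2*j+1) f w * t^j / (j.factorial:ℂ)) := by
    filter_upwards [Metric.isOpen_ball.mem_nhds hzR] with w hw
    have := stage hcb hf (q := 0) (by norm_num) t hw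
    simpa using this
  rw [hEq.deriv_eq]
  have := stage hcb hf (q := 1) (by norm_num) t hzR
  rw [this]



/-- the two-variable power series of the heat flow -/
noncomputable def P (f : ℂ → ℂ) : FormalMultilinearSeries ℂ (ℂ × ℂ) ℂ :=
  fun n => ∑ j ∈ Finset.range (n+1),
    (ee f (2*j) (n-j) / (j.factorial:ℂ)) •
      (ContinuousMultilinearMap.mkPiAlgebraFin ℂ n ℂ).compContinuousLinearMap
        (fun i => if (i:ℕ) < j then ContinuousLinearMap.fst ℂ ℂ ℂ
          else ContinuousLinearMap.snd ℂ ℂ ℂ)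

lemma P_eval (f : ℂ → ℂ) (n : ℕ) (t z : ℂ) :
    (P f n) (fun _ => (t, z)) =
      ∑ j ∈ Finset.range (n+1), ee f (2*j) (n-j) * z^(n-j) * t^j / (j.factorial:ℂ) := by
  rw [P, ContinuousMultilinearMap.sum_apply]
  refine Finset.sum_congr rfl fun j hj => ?_
  have hj' : j ≤ n := by
    have := Finset.mem_range.mp hj; omega
  rw [ContinuousMultilinearMap.smul_apply,
    ContinuousMultilinearMap.compContinuousLinearMap_apply,
    ContinuousMultilinearMap.mkPiAlgebraFin_apply, List.prod_ofFn]
  have hite : ∀ i : Fin n,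
      ((if (i:ℕ) < j then ContinuousLinearMap.fst ℂ ℂ ℂ
        else ContinuousLinearMap.snd ℂ ℂ ℂ) ((t, z))) = if (i:ℕ) < j then t else z :=
    fun i => by split <;> rfl
  simp only [hite]
  have hprod : (∏ i : Fin n, if (i:ℕ) < j then t else z) = t^j * z^(n-j) := by
    rw [Fin.prod_univ_eq_prod_range (fun i => if i < j then t else z) n,
      ← Finset.prod_range_mul_prod_Ico _ hj']
    have h1 : (∏ i ∈ Finset.range j, if i < j then t else z) = t^j := by
      rw [Finset.prod_congr rfl (fun i hi => if_pos (Finset.mem_range.mp hi)),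
        Finset.prod_const, Finset.card_range]
    have h2 : (∏ i ∈ Finset.Ico j n, if i < j then t else z) = z^(n-j) := by
      rw [Finset.prod_congr rfl (fun i hi => if_neg (by
        have := (Finset.mem_Ico.mp hi).1; omega)),
        Finset.prod_const, Nat.card_Ico]
    rw [h1, h2]
  rw [hprod, smul_eq_mul]
  ring

lemma P_norm (f : ℂ → ℂ) (n : ℕ) :
    ‖P f n‖ ≤ ∑ j ∈ Finset.range (n+1), ‖ee f (2*j) (n-j)‖ / (j.factorial:ℝ) := by
  refine (norm_sum_le _ _).trans (Finset.sum_le_sum fun j _ => ?_)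
  refine (norm_smul_le (ee f (2*j) (n-j) / (j.factorial:ℂ))
      ((ContinuousMultilinearMap.mkPiAlgebraFin ℂ n ℂ).compContinuousLinearMap
        (fun i : Fin n => if (i:ℕ) < j then ContinuousLinearMap.fst ℂ ℂ ℂ
          else ContinuousLinearMap.snd ℂ ℂ ℂ))).trans ?_
  have h1 : ‖ee f (2*j) (n-j) / (j.factorial:ℂ)‖ = ‖ee f (2*j) (n-j)‖ / (j.factorial:ℝ) := by
    rw [norm_div, Complex.norm_natCast]
  rw [h1]
  have h2 : ‖(ContinuousMultilinearMap.mkPiAlgebraFin ℂ n ℂ).compContinuousLinearMap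
      (fun i : Fin n => if (i:ℕ) < j then ContinuousLinearMap.fst ℂ ℂ ℂ
        else ContinuousLinearMap.snd ℂ ℂ ℂ)‖ ≤ 1 := by
    refine (ContinuousMultilinearMap.norm_compContinuousLinearMap_le _ _).trans ?_
    have hn : ‖ContinuousMultilinearMap.mkPiAlgebraFin ℂ n ℂ‖ ≤ 1 := by
      refine ContinuousMultilinearMap.norm_mkPiAlgebraFin_le.trans ?_
      simp
    have hL : ∀ i : Fin n, ‖if (i:ℕ) < j then ContinuousLinearMap.fst ℂ ℂ ℂ
        else ContinuousLinearMap.snd ℂ ℂ ℂ‖ ≤ 1 := fun i => by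
      split
      · exact ContinuousLinearMap.norm_fst_le ℂ ℂ ℂ
      · exact ContinuousLinearMap.norm_snd_le ℂ ℂ ℂ
    calc ‖ContinuousMultilinearMap.mkPiAlgebraFin ℂ n ℂ‖ *
          ∏ i : Fin n, ‖if (i:ℕ) < j then ContinuousLinearMap.fst ℂ ℂ ℂ
            else ContinuousLinearMap.snd ℂ ℂ ℂ‖
        ≤ 1 * ∏ i : Fin n, (1:ℝ) := by
          apply mul_le_mul hn (Finset.prod_le_prod (fun i _ => norm_nonneg _) (fun i _ => hL i))
            (Finset.prod_nonneg fun i _ => norm_nonneg _) zero_le_one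
      _ = 1 := by simp
  exact mul_le_of_le_one_right (by positivity) h2


include hcb in
lemma P_radius : (P f).radius = ⊤ := by
  apply FormalMultilinearSeries.radius_eq_top_of_summable_norm
  intro r
  have hr0 : (0:ℝ) ≤ (r:ℝ) := r.coe_nonneg
  set g : ℕ × ℕ → ℝ := fun p => ‖ee f (2*p.1+0) p.2‖ / p.1.factorial * ((r:ℝ)^p.1 * (r:ℝ)^p.2)
    with hgdef
  have hsp : Summable g := summable_prod hcb (by norm_num) hr0 hr0
  have hsig : Summable (fun n : ℕ => ∑ p ∈ Finset.HasAntidiagonal.antidiagonal n, g p) := by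
    have h1 : Summable (g ∘ (Finset.HasAntidiagonal.sigmaAntidiagonalEquivProd (A := ℕ))) :=
      (Equiv.summable_iff _).mpr hsp
    refine (h1.hasSum.sigma fun n => ?_).summable
    have h2 := hasSum_fintype (fun c : {p : ℕ × ℕ // p ∈ Finset.HasAntidiagonal.antidiagonal n} => g c)
    rwa [Finset.sum_coe_sort] at h2
  refine Summable.of_nonneg_of_le (fun n => by positivity) (fun n => ?_) hsig
  have hanti : ∑ p ∈ Finset.HasAntidiagonal.antidiagonal n, g p
      = ∑ j ∈ Finset.range (n+1), g (j, n-j) :=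
    Finset.Nat.sum_antidiagonal_eq_sum_range_succ_mk g n
  rw [hanti]
  calc ‖P f n‖ * (r:ℝ)^n ≤ (∑ j ∈ Finset.range (n+1), ‖ee f (2*j) (n-j)‖ / (j.factorial:ℝ))
        * (r:ℝ)^n := mul_le_mul_of_nonneg_right (P_norm f n) (by positivity)
    _ = ∑ j ∈ Finset.range (n+1), ‖ee f (2*j) (n-j)‖ / (j.factorial:ℝ) * (r:ℝ)^n :=
        Finset.sum_mul _ _ _
    _ = ∑ j ∈ Finset.range (n+1), g (j, n-j) := by
        refine Finset.sum_congr rfl fun j hj => ?_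
        have hj' : j ≤ n := by have := Finset.mem_range.mp hj; omega
        rw [hgdef]
        simp only []
        rw [← pow_add]
        congr 2
        omega
  
include hcb in
lemma P_hasSum (hf : Differentiable ℂ f) (y : ℂ × ℂ) :
    HasSum (fun n => P f n (fun _ => y))
      (∑' j : ℕ, iteratedDeriv (2*j) f y.2 * y.1^j / (j.factorial:ℂ)) := by
  obtain ⟨t, z⟩ := y
  set g : ℕ × ℕ → ℂ := fun p => ee f (2*p.1+0) p.2 * z^p.2 * t^p.1 / p.1.factorial with hgdef
  have hterm : Summable g := (summable_norm_term hcb (by norm_num) t z).of_norm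
  have houter := hasSum_outer hcb hf (q := 0) (by norm_num) t z
  have htsum : (∑' j : ℕ, iteratedDeriv (2*j) f z * t^j / (j.factorial:ℂ)) = ∑' p, g p := by
    exact houter.tsum_eq
  have hsig : HasSum (g ∘ (Finset.HasAntidiagonal.sigmaAntidiagonalEquivProd (A := ℕ))) (∑' p, g p) :=
    (Equiv.hasSum_iff _).mpr hterm.hasSum
  have hfib : ∀ n : ℕ, HasSum
      (fun c : {p : ℕ × ℕ // p ∈ Finset.HasAntidiagonal.antidiagonal n} => g c) (P f n (fun _ => (t, z))) := by
    intro n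
    have h2 := hasSum_fintype (fun c : {p : ℕ × ℕ // p ∈ Finset.HasAntidiagonal.antidiagonal n} => g c)
    rw [Finset.sum_coe_sort] at h2
    have h3 : ∑ p ∈ Finset.HasAntidiagonal.antidiagonal n, g p = P f n (fun _ => (t, z)) := by
      rw [Finset.Nat.sum_antidiagonal_eq_sum_range_succ_mk g n, P_eval]
      exact Finset.sum_congr rfl fun j _ => rfl
    rwa [h3] at h2
  have := hsig.sigma hfib
  simpa [htsum] using this

include hcb in
lemma claim2 (hf : Differentiable ℂ f) :
    AnalyticOnNhd ℂ
      (fun p : ℂ × ℂ => ∑' j : ℕ, iteratedDeriv (2 * j) f p.2 * p.1 ^ j / (j.factorial : ℂ))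
      Set.univ := by
  have hball : HasFPowerSeriesOnBall
      (fun p : ℂ × ℂ => ∑' j : ℕ, iteratedDeriv (2 * j) f p.2 * p.1 ^ j / (j.factorial : ℂ))
      (P f) 0 ⊤ := by
    refine ⟨by rw [P_radius hcb], ?_, ?_⟩
    · exact ENNReal.zero_lt_top
    · intro y hy
      simpa using P_hasSum hcb hf y
  intro x _
  exact hball.analyticAt_of_mem (by simp [EMetric.mem_ball, edist_lt_top])


end HeatAux
end HeatAuxSection

/-- If `f` is entire with Taylor coefficients `c_k = f⁽ᵏ⁾(0)/k!` satisfying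
`limsup_n n |c_n|^{2/n} = 0`, then the series `F(t,z) = Σ_j f⁽²ʲ⁾(z) tʲ/j!` converges
absolutely for every `(t,z)`, defines a function analytic on all of `ℂ²`, satisfies the heat
equation `∂_t F = ∂_z² F` everywhere, and has initial condition `F(0,z) = f(z)`. -/
theorem heatSeries_entire_caloric_of_small_coefficients
    (f : ℂ → ℂ) (hf : Differentiable ℂ f)
    (h : Filter.limsup
        (fun n : ℕ =>
          (((n : ℝ) * ‖iteratedDeriv n f 0 / (n.factorial : ℂ)‖ ^ (2 / (n : ℝ)) : ℝ) :
            EReal))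
        Filter.atTop = (0 : EReal)) :
    (∀ t z : ℂ,
      Summable fun j : ℕ => ‖iteratedDeriv (2 * j) f z * t ^ j / (j.factorial : ℂ)‖) ∧
    AnalyticOnNhd ℂ
      (fun p : ℂ × ℂ => ∑' j : ℕ, iteratedDeriv (2 * j) f p.2 * p.1 ^ j / (j.factorial : ℂ))
      Set.univ ∧
    (∀ t z : ℂ,
      deriv (fun s => ∑' j : ℕ, iteratedDeriv (2 * j) f z * s ^ j / (j.factorial : ℂ)) t =
        iteratedDeriv 2
          (fun w => ∑' j : ℕ, iteratedDeriv (2 * j) f w * t ^ j / (j.factorial : ℂ)) z) ∧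
    (∀ z : ℂ, (∑' j : ℕ, iteratedDeriv (2 * j) f z * (0 : ℂ) ^ j / (j.factorial : ℂ)) = f z) := by
  have hcb : ∀ ε : ℝ, 0 < ε → ∀ᶠ n in Filter.atTop,
      ‖iteratedDeriv n f 0 / (n.factorial : ℂ)‖ ≤ (ε / n) ^ ((n : ℝ) / 2) :=
    fun ε hε => HeatAux.coeff_bound h hε
  exact ⟨fun t z => HeatAux.claim1 hcb hf t z, HeatAux.claim2 hcb hf,
    fun t z => HeatAux.claim3 hcb hf t z, fun z => HeatAux.claim4 f z⟩
end

section
/- Let F : ℂ × ℂ → ℂ be an entire caloric function which is not identically zero. If F(t*, z*) = 0 and ∂_z F(t*, z*) = 0 for some point (t*, z*) ∈ ℂ², then there is an open neighborhood U of (t*, z*) in ℂ² such that |F(t,z)| + |∂_z F(t,z)| > 0 for every (t,z) ∈ U \ {(t*, z*)}. Consequently, the set M_F := {(t,z) ∈ ℂ² : F(t,z) = ∂_z F(t,z) = 0} of multiple zeros of F (viewed as a function of z) is a discrete subset of ℂ². -/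
open Filter MeasureTheory

/-- An entire caloric function: `F : ℂ × ℂ → ℂ` is analytic on all of `ℂ²` and satisfies
the heat equation `∂_t F(t,z) = ∂_z² F(t,z)` everywhere. -/
def IsEntireCaloric (F : ℂ × ℂ → ℂ) : Prop :=
  AnalyticOnNhd ℂ F Set.univ ∧
    ∀ t z : ℂ, deriv (fun s => F (s, z)) t = iteratedDeriv 2 (fun w => F (t, w)) z

noncomputable def D2 (G : ℂ × ℂ → ℂ) : ℂ × ℂ → ℂ := fun p => fderiv ℂ G p (0, 1)
noncomputable def D1 (G : ℂ × ℂ → ℂ) : ℂ × ℂ → ℂ := fun p => fderiv ℂ G p (1, 0)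

lemma D2_analytic {G : ℂ × ℂ → ℂ} (hG : AnalyticOnNhd ℂ G Set.univ) :
    AnalyticOnNhd ℂ (D2 G) Set.univ := by
  have h1 : AnalyticOnNhd ℂ (fderiv ℂ G) Set.univ := hG.fderiv
  have h2 := ((ContinuousLinearMap.apply ℂ ℂ ((0,1) : ℂ × ℂ)).analyticOnNhd
      (Set.univ : Set ((ℂ × ℂ) →L[ℂ] ℂ))).comp h1 (Set.mapsTo_univ _ _)
  exact h2

lemma D1_analytic {G : ℂ × ℂ → ℂ} (hG : AnalyticOnNhd ℂ G Set.univ) :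
    AnalyticOnNhd ℂ (D1 G) Set.univ := by
  exact ((ContinuousLinearMap.apply ℂ ℂ ((1,0) : ℂ × ℂ)).analyticOnNhd
      (Set.univ : Set ((ℂ × ℂ) →L[ℂ] ℂ))).comp hG.fderiv (Set.mapsTo_univ _ _)

lemma sliceD2 {G : ℂ × ℂ → ℂ} (hG : AnalyticOnNhd ℂ G Set.univ) (t z : ℂ) :
    deriv (fun w => G (t, w)) z = D2 G (t, z) := by
  have hdiff : DifferentiableAt ℂ G (t, z) := (hG (t,z) trivial).differentiableAt
  have hline : HasDerivAt (fun w : ℂ => ((t, w) : ℂ × ℂ)) ((0,1) : ℂ × ℂ) z :=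
    (hasDerivAt_const z t).prodMk (hasDerivAt_id z)
  have := hdiff.hasFDerivAt.comp_hasDerivAt z hline
  exact this.deriv

lemma sliceD1 {G : ℂ × ℂ → ℂ} (hG : AnalyticOnNhd ℂ G Set.univ) (t z : ℂ) :
    deriv (fun s => G (s, z)) t = D1 G (t, z) := by
  have hdiff : DifferentiableAt ℂ G (t, z) := (hG (t,z) trivial).differentiableAt
  have hline : HasDerivAt (fun s : ℂ => ((s, z) : ℂ × ℂ)) ((1,0) : ℂ × ℂ) t :=
    (hasDerivAt_id t).prodMk (hasDerivAt_const t z)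
  exact ((hdiff.hasFDerivAt.comp_hasDerivAt t hline)).deriv

lemma Dcomm {G : ℂ × ℂ → ℂ} (hG : AnalyticOnNhd ℂ G Set.univ) :
    D1 (D2 G) = D2 (D1 G) := by
  funext p
  have hfd : AnalyticOnNhd ℂ (fderiv ℂ G) Set.univ := hG.fderiv
  have hdF : DifferentiableAt ℂ (fderiv ℂ G) p := (hfd p trivial).differentiableAt
  have hsym : IsSymmSndFDerivAt ℂ G p := by
    refine ContDiffAt.isSymmSndFDerivAt ?_ (n := (⊤ : WithTop ℕ∞)) le_top
    exact (hG p trivial).contDiffAt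
  have key : ∀ v u : ℂ × ℂ, fderiv ℂ (fun q => fderiv ℂ G q v) p u
      = fderiv ℂ (fderiv ℂ G) p u v := by
    intro v u
    have h1 : HasFDerivAt (fun q => fderiv ℂ G q v)
        ((ContinuousLinearMap.apply ℂ ℂ v).comp (fderiv ℂ (fderiv ℂ G) p)) p :=
      (ContinuousLinearMap.apply ℂ ℂ v).hasFDerivAt.comp p hdF.hasFDerivAt
    rw [h1.fderiv]; rfl
  show fderiv ℂ (fun q => fderiv ℂ G q (0,1)) p (1,0)
      = fderiv ℂ (fun q => fderiv ℂ G q (1,0)) p (0,1)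
  rw [key, key]
  exact hsym.eq _ _

lemma D2_iter_analytic {G : ℂ × ℂ → ℂ} (hG : AnalyticOnNhd ℂ G Set.univ) (n : ℕ) :
    AnalyticOnNhd ℂ (D2^[n] G) Set.univ := by
  induction n with
  | zero => exact hG
  | succ n ih => rw [Function.iterate_succ_apply']; exact D2_analytic ih

lemma D1_iter_analytic {G : ℂ × ℂ → ℂ} (hG : AnalyticOnNhd ℂ G Set.univ) (n : ℕ) :
    AnalyticOnNhd ℂ (D1^[n] G) Set.univ := by
  induction n with
  | zero => exact hG
  | succ n ih => rw [Function.iterate_succ_apply']; exact D1_analytic ih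

lemma hiter2 {G : ℂ × ℂ → ℂ} (hG : AnalyticOnNhd ℂ G Set.univ) (n : ℕ) (t z : ℂ) :
    iteratedDeriv n (fun w => G (t, w)) z = (D2^[n] G) (t, z) := by
  induction n generalizing z with
  | zero => rfl
  | succ n ih =>
    rw [iteratedDeriv_succ]
    have : iteratedDeriv n (fun w => G (t, w))
        = fun z' => (D2^[n] G) (t, z') := funext fun z' => ih z'
    rw [this, sliceD2 (D2_iter_analytic hG n) t z, Function.iterate_succ_apply']

lemma hiter1 {G : ℂ × ℂ → ℂ} (hG : AnalyticOnNhd ℂ G Set.univ) (n : ℕ) (t z : ℂ) :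
    iteratedDeriv n (fun s => G (s, z)) t = (D1^[n] G) (t, z) := by
  induction n generalizing t with
  | zero => rfl
  | succ n ih =>
    rw [iteratedDeriv_succ]
    have : iteratedDeriv n (fun s => G (s, z))
        = fun t' => (D1^[n] G) (t', z) := funext fun t' => ih t'
    rw [this, sliceD1 (D1_iter_analytic hG n) t z, Function.iterate_succ_apply']

lemma Dcomm_iter (n : ℕ) : ∀ (G : ℂ × ℂ → ℂ), AnalyticOnNhd ℂ G Set.univ →
    D1 (D2^[n] G) = D2^[n] (D1 G) := by
  induction n with
  | zero => intro G _; rfl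
  | succ n ih =>
    intro G hG
    rw [Function.iterate_succ_apply, ih (D2 G) (D2_analytic hG), Dcomm hG,
      ← Function.iterate_succ_apply]

lemma heat_eq {F : ℂ × ℂ → ℂ} (hF : IsEntireCaloric F) : D1 F = D2 (D2 F) := by
  funext p
  obtain ⟨t, z⟩ := p
  rw [← sliceD1 hF.1 t z, hF.2 t z, hiter2 hF.1 2 t z]
  rfl

lemma iter_heat {F : ℂ × ℂ → ℂ} (hF : IsEntireCaloric F) (j : ℕ) :
    D1^[j] F = D2^[2 * j] F := by
  induction j with
  | zero => rfl
  | succ j ih =>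
    rw [Function.iterate_succ_apply', ih, Dcomm_iter (2*j) F hF.1, heat_eq hF]
    have h2 : 2 * (j + 1) = 2 * j + 2 := by omega
    rw [h2, Function.iterate_add_apply]
    rfl

lemma caloric_D2 {F : ℂ × ℂ → ℂ} (hF : IsEntireCaloric F) : IsEntireCaloric (D2 F) := by
  refine ⟨D2_analytic hF.1, fun t z => ?_⟩
  rw [sliceD1 (D2_analytic hF.1) t z, hiter2 (D2_analytic hF.1) 2 t z]
  have : D1 (D2 F) = D2^[2] (D2 F) := by
    rw [Dcomm hF.1, heat_eq hF]; rfl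
  rw [this]

noncomputable def hpoly (d : ℕ) (s w : ℂ) : ℂ :=
  ∑ j ∈ Finset.range (d / 2 + 1),
    s ^ j * w ^ (d - 2 * j) * (((j.factorial : ℂ))⁻¹ * (((d - 2 * j).factorial : ℂ))⁻¹)

lemma hpoly_zero_d (s w : ℂ) : hpoly 0 s w = 1 := by
  simp [hpoly]

lemma hpoly_one (s w : ℂ) : hpoly 1 s w = w := by
  simp [hpoly]

lemma hpoly_s_zero (d : ℕ) (w : ℂ) : hpoly d 0 w = w ^ d * ((d.factorial : ℂ))⁻¹ := by
  rw [hpoly, Finset.sum_eq_single 0]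
  · simp
  · intro j hj hj0
    simp [zero_pow hj0]
  · intro h; simp at h

lemma hpoly_homog (d : ℕ) (lam s w : ℂ) :
    hpoly d (lam ^ 2 * s) (lam * w) = lam ^ d * hpoly d s w := by
  rw [hpoly, hpoly, Finset.mul_sum]
  refine Finset.sum_congr rfl fun j hj => ?_
  have h2j : 2 * j ≤ d := by
    have := Finset.mem_range.mp hj
    omega
  rw [mul_pow, mul_pow, ← pow_mul]
  have : lam ^ (2 * j) * s ^ j * (lam ^ (d - 2 * j) * w ^ (d - 2 * j))
      = (lam ^ (2 * j) * lam ^ (d - 2 * j)) * (s ^ j * w ^ (d - 2 * j)) := by ring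
  rw [this, ← pow_add]
  have : 2 * j + (d - 2 * j) = d := by omega
  rw [this]; ring

lemma fact_cancel (k : ℕ) : ((k + 1 : ℕ) : ℂ) * (((k + 1).factorial : ℂ))⁻¹
    = ((k.factorial : ℂ))⁻¹ := by
  rw [Nat.factorial_succ, Nat.cast_mul, mul_inv, ← mul_assoc, mul_inv_cancel₀, one_mul]
  exact Nat.cast_ne_zero.mpr (by omega)

lemma JL (d : ℕ) (s w : ℂ) :
    ∑ j ∈ Finset.range (d / 2 + 2), (2 * (j : ℂ)) * (s ^ j * w ^ (d + 2 - 2 * j) *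
      (((j.factorial : ℂ))⁻¹ * (((d + 2 - 2 * j).factorial : ℂ))⁻¹))
    = 2 * s * hpoly d s w := by
  rw [show d / 2 + 2 = (d / 2 + 1) + 1 from rfl, Finset.sum_range_succ']
  simp only [Nat.cast_zero, mul_zero, zero_mul, add_zero]
  rw [hpoly, Finset.mul_sum]
  refine Finset.sum_congr rfl fun i hi => ?_
  have h2i : 2 * i ≤ d := by
    have := Finset.mem_range.mp hi; omega
  have he : d + 2 - 2 * (i + 1) = d - 2 * i := by omega
  rw [he]
  have := fact_cancel i
  push_cast at this ⊢
  calc (2 * ((i : ℂ) + 1)) * (s ^ (i + 1) * w ^ (d - 2 * i) *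
        ((((i + 1).factorial : ℂ))⁻¹ * (((d - 2 * i).factorial : ℂ))⁻¹))
      = 2 * (s ^ (i + 1) * w ^ (d - 2 * i)) * ((((i : ℂ) + 1)) * (((i + 1).factorial : ℂ))⁻¹
          * (((d - 2 * i).factorial : ℂ))⁻¹) := by ring
    _ = 2 * (s ^ (i + 1) * w ^ (d - 2 * i)) * (((i.factorial : ℂ))⁻¹
          * (((d - 2 * i).factorial : ℂ))⁻¹) := by rw [this]
    _ = 2 * s * (s ^ i * w ^ (d - 2 * i) * (((i.factorial : ℂ))⁻¹
          * (((d - 2 * i).factorial : ℂ))⁻¹)) := by rw [pow_succ]; ring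

lemma KL (d : ℕ) (s w : ℂ) :
    ∑ j ∈ Finset.range (d / 2 + 2), ((d + 2 - 2 * j : ℕ) : ℂ) * (s ^ j * w ^ (d + 2 - 2 * j) *
      (((j.factorial : ℂ))⁻¹ * (((d + 2 - 2 * j).factorial : ℂ))⁻¹))
    = w * hpoly (d + 1) s w := by
  have main : ∀ j : ℕ, 2 * j ≤ d + 1 →
      ((d + 2 - 2 * j : ℕ) : ℂ) * (s ^ j * w ^ (d + 2 - 2 * j) *
        (((j.factorial : ℂ))⁻¹ * (((d + 2 - 2 * j).factorial : ℂ))⁻¹))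
      = w * (s ^ j * w ^ (d + 1 - 2 * j) *
        (((j.factorial : ℂ))⁻¹ * (((d + 1 - 2 * j).factorial : ℂ))⁻¹)) := by
    intro j hj
    set k := d + 1 - 2 * j with hk
    have hk1 : d + 2 - 2 * j = k + 1 := by omega
    rw [hk1, pow_succ]
    have := fact_cancel k
    calc ((k + 1 : ℕ) : ℂ) * (s ^ j * (w ^ k * w) *
          (((j.factorial : ℂ))⁻¹ * ((((k+1).factorial : ℂ)))⁻¹))
        = (((k + 1 : ℕ) : ℂ) * (((k+1).factorial : ℂ))⁻¹) * (s ^ j * (w ^ k * w) *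
          (((j.factorial : ℂ))⁻¹)) := by ring
      _ = ((k.factorial : ℂ))⁻¹ * (s ^ j * (w ^ k * w) * (((j.factorial : ℂ))⁻¹)) := by
          rw [this]
      _ = w * (s ^ j * w ^ k * (((j.factorial : ℂ))⁻¹ * ((k.factorial : ℂ))⁻¹)) := by ring
  rcases Nat.even_or_odd d with ⟨a, ha⟩ | ⟨a, ha⟩
  · -- d = a + a
    have h1 : d / 2 + 2 = (a + 1) + 1 := by omega
    have h2 : (d + 1) / 2 + 1 = a + 1 := by omega
    rw [h1, Finset.sum_range_succ]
    have hzero : ((d + 2 - 2 * (a + 1) : ℕ) : ℂ) = 0 := by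
      have : d + 2 - 2 * (a + 1) = 0 := by omega
      rw [this]; simp
    rw [hzero, zero_mul, add_zero, hpoly, h2, Finset.mul_sum]
    refine Finset.sum_congr rfl fun j hj => ?_
    exact main j (by have := Finset.mem_range.mp hj; omega)
  · -- d = 2a+1
    have h1 : d / 2 + 2 = a + 2 := by omega
    have h2 : (d + 1) / 2 + 1 = a + 2 := by omega
    rw [h1, hpoly, h2, Finset.mul_sum]
    refine Finset.sum_congr rfl fun j hj => ?_
    exact main j (by have := Finset.mem_range.mp hj; omega)

lemma euler (d : ℕ) (s w : ℂ) :
    ((d + 2 : ℕ) : ℂ) * hpoly (d + 2) s w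
      = w * hpoly (d + 1) s w + 2 * s * hpoly d s w := by
  have hr : (d + 2) / 2 + 1 = d / 2 + 2 := by omega
  rw [hpoly, hr, Finset.mul_sum, ← KL d s w, ← JL d s w, ← Finset.sum_add_distrib]
  refine Finset.sum_congr rfl fun j hj => ?_
  have hj' : 2 * j ≤ d + 2 := by have := Finset.mem_range.mp hj; omega
  have hsplit : ((d + 2 : ℕ) : ℂ) = ((d + 2 - 2 * j : ℕ) : ℂ) + 2 * (j : ℂ) := by
    have : (d + 2 - 2 * j) + 2 * j = d + 2 := by omega
    calc ((d + 2 : ℕ) : ℂ) = (((d + 2 - 2 * j) + 2 * j : ℕ) : ℂ) := by rw [this]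
      _ = ((d + 2 - 2 * j : ℕ) : ℂ) + 2 * (j : ℂ) := by push_cast; ring
  rw [hsplit]
  ring

lemma no_common : ∀ d : ℕ, 1 ≤ d → ∀ s w : ℂ,
    hpoly d s w = 0 → hpoly (d - 1) s w = 0 → s = 0 ∧ w = 0 := by
  intro d
  induction d using Nat.strong_induction_on with
  | _ d ih =>
    intro hd s w h1 h2
    by_cases hs : s = 0
    · subst hs
      refine ⟨rfl, ?_⟩
      rw [hpoly_s_zero] at h1
      have : w ^ d = 0 := by
        rcases mul_eq_zero.mp h1 with h | h
        · exact h
        · exact absurd h (inv_ne_zero (Nat.cast_ne_zero.mpr d.factorial_ne_zero))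
      exact pow_eq_zero_iff (by omega) |>.mp this
    · exfalso
      rcases Nat.lt_or_ge d 2 with hd2 | hd2
      · have hd1 : d = 1 := by omega
        subst hd1
        simp [hpoly_zero_d] at h2
      · obtain ⟨e, rfl⟩ : ∃ e, d = e + 2 := ⟨d - 2, by omega⟩
        have he := euler e s w
        rw [h1, show e + 2 - 1 = e + 1 from rfl] at *
        rw [h2] at he
        simp only [mul_zero, zero_mul, zero_add] at he
        have he0 : hpoly e s w = 0 := by
          have h2s : (2 : ℂ) * s ≠ 0 := mul_ne_zero two_ne_zero hs
          rcases mul_eq_zero.mp he.symm with h | h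
          · exact absurd h h2s
          · exact h
        have := ih (e + 1) (by omega) (by omega) s w h2 (by simpa using he0)
        exact hs this.1

lemma hpoly_continuous (d : ℕ) : Continuous (fun p : ℂ × ℂ => hpoly d p.1 p.2) := by
  unfold hpoly
  refine continuous_finset_sum _ fun j _ => ?_
  fun_prop

noncomputable def rho (s w : ℂ) : ℝ := max (Real.sqrt ‖s‖) ‖w‖

lemma rho_nonneg (s w : ℂ) : 0 ≤ rho s w :=
  le_trans (Real.sqrt_nonneg _) (le_max_left _ _)

lemma rho_pos {s w : ℂ} (h : ¬(s = 0 ∧ w = 0)) : 0 < rho s w := by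
  rcases (rho_nonneg s w).lt_or_eq with h' | h'
  · exact h'
  · exfalso
    have h1 : Real.sqrt ‖s‖ ≤ 0 := le_trans (le_max_left _ _) h'.symm.le
    have h2 : ‖w‖ ≤ 0 := le_trans (le_max_right _ _) h'.symm.le
    have hs0 : ‖s‖ = 0 := by
      have h3 := le_antisymm h1 (Real.sqrt_nonneg _)
      exact (Real.sqrt_eq_zero (norm_nonneg s)).mp h3
    exact h ⟨norm_eq_zero.mp hs0, norm_eq_zero.mp (le_antisymm h2 (norm_nonneg w))⟩

lemma norm_s_le (s w : ℂ) : ‖s‖ ≤ rho s w ^ 2 := by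
  have h1 : Real.sqrt ‖s‖ ≤ rho s w := le_max_left _ _
  have := Real.sq_sqrt (norm_nonneg s)
  nlinarith [Real.sqrt_nonneg ‖s‖]

lemma norm_w_le (s w : ℂ) : ‖w‖ ≤ rho s w := le_max_right _ _

lemma hpoly_lower (d : ℕ) (hd : 1 ≤ d) : ∃ δ > 0, ∀ s w : ℂ, ¬(s = 0 ∧ w = 0) →
    δ * rho s w ^ d ≤ ‖hpoly d s w‖ + rho s w * ‖hpoly (d - 1) s w‖ := by
  set φ : ℂ × ℂ → ℝ := fun p => ‖hpoly d p.1 p.2‖ + ‖hpoly (d - 1) p.1 p.2‖ with hφ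
  have hφc : Continuous φ := ((hpoly_continuous d).norm.add (hpoly_continuous (d-1)).norm)
  have hK : IsCompact (Metric.sphere (0 : ℂ × ℂ) 1) := isCompact_sphere 0 1
  have hne : (Metric.sphere (0 : ℂ × ℂ) 1).Nonempty := by
    refine ⟨((1 : ℂ), (0 : ℂ)), ?_⟩
    simp [Prod.norm_def]
  obtain ⟨p₀, hp₀K, hp₀min⟩ := hK.exists_isMinOn hne hφc.continuousOn
  have hp₀ : ∀ q ∈ Metric.sphere (0 : ℂ × ℂ) 1, φ p₀ ≤ φ q := fun q hq => hp₀min hq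
  have hδpos : 0 < φ p₀ := by
    rcases lt_or_eq_of_le (add_nonneg (norm_nonneg _) (norm_nonneg _) :
        (0:ℝ) ≤ φ p₀) with h | h
    · exact h
    · exfalso
      have hsum : ‖hpoly d p₀.1 p₀.2‖ + ‖hpoly (d-1) p₀.1 p₀.2‖ = 0 := h.symm
      have h1 : hpoly d p₀.1 p₀.2 = 0 := norm_eq_zero.mp (le_antisymm
        (by nlinarith [norm_nonneg (hpoly (d-1) p₀.1 p₀.2)]) (norm_nonneg _))
      have h2 : hpoly (d-1) p₀.1 p₀.2 = 0 := norm_eq_zero.mp (le_antisymm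
        (by nlinarith [norm_nonneg (hpoly d p₀.1 p₀.2)]) (norm_nonneg _))
      have hzz := no_common d hd p₀.1 p₀.2 h1 h2
      have hp0 : p₀ = 0 := Prod.ext hzz.1 hzz.2
      rw [mem_sphere_iff_norm, hp0] at hp₀K
      simp at hp₀K
  refine ⟨φ p₀, hδpos, fun s w hsw => ?_⟩
  have hρ : 0 < rho s w := rho_pos hsw
  set ρ : ℝ := rho s w with hρdef
  set σ : ℂ := s / (ρ : ℂ) ^ 2 with hσdef
  set ω : ℂ := w / (ρ : ℂ) with hωdef
  have hρC : ((ρ : ℂ)) ≠ 0 := by exact_mod_cast ne_of_gt hρ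
  have hσs : (ρ : ℂ) ^ 2 * σ = s := by rw [hσdef]; field_simp
  have hωw : (ρ : ℂ) * ω = w := by rw [hωdef]; field_simp
  have hns : ‖σ‖ = ‖s‖ / ρ ^ 2 := by
    rw [hσdef, norm_div, norm_pow, Complex.norm_real, Real.norm_of_nonneg hρ.le]
  have hnw : ‖ω‖ = ‖w‖ / ρ := by
    rw [hωdef, norm_div, Complex.norm_real, Real.norm_of_nonneg hρ.le]
  have h1 : ‖σ‖ ≤ 1 := by
    rw [hns, div_le_one (by positivity)]; exact norm_s_le s w
  have h2 : ‖ω‖ ≤ 1 := by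
    rw [hnw, div_le_one hρ]; exact norm_w_le s w
  have hsphere : (σ, ω) ∈ Metric.sphere (0 : ℂ × ℂ) 1 := by
    rw [mem_sphere_iff_norm, sub_zero, Prod.norm_def]
    rcases max_cases (Real.sqrt ‖s‖) ‖w‖ with ⟨heq, _⟩ | ⟨heq, _⟩
    · have hsρ : ‖s‖ = ρ ^ 2 := by
        have hq : Real.sqrt ‖s‖ = ρ := by rw [hρdef, rho, heq]
        nlinarith [Real.sq_sqrt (norm_nonneg s)]
      have : ‖σ‖ = 1 := by rw [hns, hsρ]; field_simp
      exact le_antisymm (max_le h1 h2) (this ▸ le_max_left _ _)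
    · have : ‖ω‖ = 1 := by
        rw [hnw]
        have hwρ : ‖w‖ = ρ := by rw [hρdef, rho, heq]
        rw [hwρ]; field_simp
      exact le_antisymm (max_le h1 h2) (this ▸ le_max_right _ _)
  have hmin := hp₀ (σ, ω) hsphere
  have e1 : ‖hpoly d s w‖ = ρ ^ d * ‖hpoly d σ ω‖ := by
    calc ‖hpoly d s w‖ = ‖hpoly d ((ρ:ℂ)^2 * σ) ((ρ:ℂ) * ω)‖ := by rw [hσs, hωw]
      _ = ‖(ρ:ℂ)^d * hpoly d σ ω‖ := by rw [hpoly_homog]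
      _ = ρ ^ d * ‖hpoly d σ ω‖ := by
          rw [norm_mul, norm_pow, Complex.norm_real, Real.norm_of_nonneg hρ.le]
  have e2 : ‖hpoly (d-1) s w‖ = ρ ^ (d-1) * ‖hpoly (d-1) σ ω‖ := by
    calc ‖hpoly (d-1) s w‖ = ‖hpoly (d-1) ((ρ:ℂ)^2 * σ) ((ρ:ℂ) * ω)‖ := by rw [hσs, hωw]
      _ = ‖(ρ:ℂ)^(d-1) * hpoly (d-1) σ ω‖ := by rw [hpoly_homog]
      _ = ρ ^ (d-1) * ‖hpoly (d-1) σ ω‖ := by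
          rw [norm_mul, norm_pow, Complex.norm_real, Real.norm_of_nonneg hρ.le]
  have hpow : ρ * ρ ^ (d - 1) = ρ ^ d := by
    rw [← pow_succ']
    congr 1
    omega
  calc φ p₀ * ρ ^ d ≤ (‖hpoly d σ ω‖ + ‖hpoly (d-1) σ ω‖) * ρ ^ d := by
        apply mul_le_mul_of_nonneg_right hmin (by positivity)
    _ = ρ ^ d * ‖hpoly d σ ω‖ + ρ * (ρ ^ (d-1) * ‖hpoly (d-1) σ ω‖) := by
        rw [← mul_assoc, hpow]; ring
    _ = ‖hpoly d s w‖ + ρ * ‖hpoly (d-1) s w‖ := by rw [e1, e2]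

lemma slice2_diff {G : ℂ × ℂ → ℂ} (hG : AnalyticOnNhd ℂ G Set.univ) (t : ℂ) :
    Differentiable ℂ (fun w => G (t, w)) := by
  intro z
  have h1 : DifferentiableAt ℂ G (t, z) := (hG (t, z) trivial).differentiableAt
  exact h1.comp z ((differentiableAt_const t).prodMk differentiableAt_id)

lemma slice1_diff {G : ℂ × ℂ → ℂ} (hG : AnalyticOnNhd ℂ G Set.univ) (z : ℂ) :
    Differentiable ℂ (fun t => G (t, z)) := by
  intro t
  have h1 : DifferentiableAt ℂ G (t, z) := (hG (t, z) trivial).differentiableAt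
  exact h1.comp t (differentiableAt_id.prodMk (differentiableAt_const z))

-- coefficient function
noncomputable def cfun (F : ℂ × ℂ → ℂ) (t₀ z₀ : ℂ) : ℕ → ℂ := fun n => D2^[n] F (t₀, z₀)

lemma c_even {F : ℂ × ℂ → ℂ} (hF : IsEntireCaloric F) (t₀ z₀ : ℂ) (j : ℕ) :
    iteratedDeriv j (fun t => F (t, z₀)) t₀ = cfun F t₀ z₀ (2 * j) := by
  rw [hiter1 hF.1 j t₀ z₀, iter_heat hF j]; rfl

lemma c_odd {F : ℂ × ℂ → ℂ} (hF : IsEntireCaloric F) (t₀ z₀ : ℂ) (j : ℕ) :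
    iteratedDeriv j (fun t => D2 F (t, z₀)) t₀ = cfun F t₀ z₀ (2 * j + 1) := by
  rw [hiter1 (D2_analytic hF.1) j t₀ z₀, iter_heat (caloric_D2 hF) j]
  show D2^[2*j] (D2 F) (t₀, z₀) = D2^[2*j+1] F (t₀, z₀)
  rw [← Function.iterate_succ_apply]

-- bound on coefficients
lemma coeff_bound {F : ℂ × ℂ → ℂ} (hF : IsEntireCaloric F) (t₀ z₀ : ℂ) :
    ∃ A : ℝ, 0 < A ∧ ∀ n : ℕ, ‖cfun F t₀ z₀ n‖ ≤ A * (n / 2).factorial := by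
  have key : ∀ G : ℂ → ℂ, Differentiable ℂ G →
      ∃ B : ℝ, ∀ j : ℕ, ‖iteratedDeriv j G t₀‖ ≤ B * j.factorial := by
    intro G hG
    have hs := (Complex.hasSum_taylorSeries_of_entire hG t₀ (t₀ + 1)).summable
    simp only [add_sub_cancel_left, one_pow, smul_eq_mul, one_mul] at hs
    have htend : Filter.Tendsto (fun j => ‖(j.factorial : ℂ)⁻¹ * iteratedDeriv j G t₀‖)
        Filter.atTop (nhds 0) := by
      simpa using hs.tendsto_atTop_zero.norm
    obtain ⟨B, hB⟩ := htend.bddAbove_range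
    refine ⟨B, fun j => ?_⟩
    have h1 : ‖(j.factorial : ℂ)⁻¹ * iteratedDeriv j G t₀‖ ≤ B :=
      hB (Set.mem_range_self j)
    have h2 : ‖(j.factorial : ℂ)⁻¹ * iteratedDeriv j G t₀‖
        = ‖iteratedDeriv j G t₀‖ / (j.factorial : ℝ) := by
      rw [norm_mul, norm_inv]
      have : ‖((j.factorial : ℕ) : ℂ)‖ = (j.factorial : ℝ) := by
        rw [Complex.norm_natCast]
      rw [this]; ring
    rw [h2, div_le_iff₀ (by positivity)] at h1
    linarith [h1]
  obtain ⟨B₀, hB₀⟩ := key (fun t => F (t, z₀)) (slice1_diff hF.1 z₀)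
  obtain ⟨B₁, hB₁⟩ := key (fun t => D2 F (t, z₀)) (slice1_diff (D2_analytic hF.1) z₀)
  refine ⟨max (max B₀ B₁) 0 + 1, by positivity, fun n => ?_⟩
  rcases Nat.even_or_odd n with ⟨j, hj⟩ | ⟨j, hj⟩
  · have hn : n = 2 * j := by omega
    subst hn
    have := hB₀ j
    rw [c_even hF t₀ z₀ j] at this
    have hj2 : 2 * j / 2 = j := by omega
    rw [hj2]
    have : ‖cfun F t₀ z₀ (2 * j)‖ ≤ B₀ * j.factorial := this
    nlinarith [(by exact_mod_cast Nat.factorial_pos j : (0:ℝ) < j.factorial), le_max_left B₀ B₁, le_max_left (max B₀ B₁) 0]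
  · have hn : n = 2 * j + 1 := by omega
    subst hn
    have := hB₁ j
    rw [c_odd hF t₀ z₀ j] at this
    have hj2 : (2 * j + 1) / 2 = j := by omega
    rw [hj2]
    nlinarith [(by exact_mod_cast Nat.factorial_pos j : (0:ℝ) < j.factorial), le_max_right B₀ B₁, le_max_left (max B₀ B₁) 0]

lemma fact_ineq (j k : ℕ) : (((2*j+k) / 2).factorial : ℝ) ≤ 2 ^ (2*j+k) * j.factorial * k.factorial := by
  have hdiv : (2*j+k) / 2 = j + k / 2 := Nat.mul_add_div (by norm_num) j k
  rw [hdiv]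
  set q := k / 2
  have hnat : (j + q).factorial ≤ 2 ^ (j + q) * j.factorial * q.factorial := by
    have hch : (j + q).choose j * j.factorial * q.factorial = (j + q).factorial := by
      have := Nat.choose_mul_factorial_mul_factorial (Nat.le_add_right j q)
      simpa using this
    have hle : (j + q).choose j ≤ 2 ^ (j + q) := by
      calc (j + q).choose j ≤ ∑ i ∈ Finset.range (j + q + 1), (j + q).choose i :=
            Finset.single_le_sum (fun i _ => Nat.zero_le _) (Finset.mem_range.mpr (by omega))
        _ = 2 ^ (j + q) := Nat.sum_range_choose (j + q)
    calc (j + q).factorial = (j + q).choose j * j.factorial * q.factorial := hch.symm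
      _ ≤ 2 ^ (j + q) * j.factorial * q.factorial := by
          exact Nat.mul_le_mul_right _ (Nat.mul_le_mul_right _ hle)
  have hq : q.factorial ≤ k.factorial := Nat.factorial_le (Nat.div_le_self k 2)
  have hpow : (2:ℕ) ^ (j + q) ≤ 2 ^ (2*j+k) := Nat.pow_le_pow_right (by norm_num) (by omega)
  have : (j + q).factorial ≤ 2 ^ (2*j+k) * j.factorial * k.factorial := by
    calc (j + q).factorial ≤ 2 ^ (j + q) * j.factorial * q.factorial := hnat
      _ ≤ 2 ^ (2*j+k) * j.factorial * k.factorial := by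
          exact Nat.mul_le_mul (Nat.mul_le_mul hpow le_rfl) hq
  exact_mod_cast this

lemma main_est (F : ℂ × ℂ → ℂ) (hF : IsEntireCaloric F) (t₀ z₀ : ℂ) (d : ℕ)
    (hvan : ∀ n, n < d → cfun F t₀ z₀ n = 0) :
    ∃ C, 0 < C ∧ ∀ s w : ℂ, rho s w ≤ 1/4 →
      ‖F (t₀ + s, z₀ + w) - cfun F t₀ z₀ d * hpoly d s w‖ ≤ C * rho s w ^ (d + 1) := by
  classical
  set c : ℕ → ℂ := cfun F t₀ z₀ with hc
  obtain ⟨A, hA0, hA⟩ := coeff_bound hF t₀ z₀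
  refine ⟨A * 4 ^ (d + 2), by positivity, fun s w hρ4 => ?_⟩
  set ρ : ℝ := rho s w with hρdef
  have hρ0 : 0 ≤ ρ := rho_nonneg s w
  set x : ℝ := 2 * ρ with hxdef
  have hx0 : 0 ≤ x := by positivity
  have hx2 : x ≤ 1/2 := by rw [hxdef]; linarith
  have hsle : ‖s‖ ≤ ρ^2 := norm_s_le s w
  have hwle : ‖w‖ ≤ ρ := norm_w_le s w
  set U : ℕ × ℕ → ℂ := fun p => ((p.1.factorial : ℂ))⁻¹ * s ^ p.1 *
    (((p.2.factorial : ℂ))⁻¹ * w ^ p.2 * c (2 * p.1 + p.2)) with hU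
  have factC : ∀ n : ℕ, ‖((n.factorial : ℕ) : ℂ)⁻¹‖ = ((n.factorial : ℝ))⁻¹ := by
    intro n
    rw [norm_inv, Complex.norm_natCast]
  have hUnorm : ∀ p : ℕ × ℕ, ‖U p‖ ≤ A * x ^ (2 * p.1 + p.2) := by
    rintro ⟨j, k⟩
    set n := 2 * j + k with hn
    have hfj : (0:ℝ) < j.factorial := by exact_mod_cast j.factorial_pos
    have hfk : (0:ℝ) < k.factorial := by exact_mod_cast k.factorial_pos
    have e0 : ‖U (j, k)‖ = ((j.factorial:ℝ))⁻¹ * ((k.factorial:ℝ))⁻¹ *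
        (‖s‖^j * ‖w‖^k * ‖c n‖) := by
      simp only [hU, norm_mul, norm_pow, factC]
      ring
    have h2 : ‖s‖^j ≤ ρ^(2*j) := by
      rw [pow_mul]
      exact pow_le_pow_left₀ (norm_nonneg s) hsle j
    have h3 : ‖w‖^k ≤ ρ^k := pow_le_pow_left₀ (norm_nonneg w) hwle k
    have h45 : ‖c n‖ ≤ A * (2 ^ n * j.factorial * k.factorial) := by
      calc ‖c n‖ ≤ A * ((n / 2).factorial : ℝ) := hA n
        _ ≤ A * (2 ^ n * j.factorial * k.factorial) := by
            have := fact_ineq j k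
            exact mul_le_mul_of_nonneg_left (by exact_mod_cast this) hA0.le
    calc ‖U (j, k)‖ = ((j.factorial:ℝ))⁻¹ * ((k.factorial:ℝ))⁻¹ *
          (‖s‖^j * ‖w‖^k * ‖c n‖) := e0
      _ ≤ ((j.factorial:ℝ))⁻¹ * ((k.factorial:ℝ))⁻¹ *
          (ρ^(2*j) * ρ^k * (A * (2 ^ n * j.factorial * k.factorial))) := by
          gcongr <;> positivity
      _ = A * (2^n * ρ^n) := by
          rw [show ρ^(2*j) * ρ^k = ρ^n from by rw [← pow_add]]
          field_simp
      _ = A * x ^ n := by rw [hxdef, mul_pow]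
  have hgeo : Summable (fun p : ℕ × ℕ => A * ((x^2) ^ p.1 * x ^ p.2)) := by
    have hx1 : x < 1 := lt_of_le_of_lt hx2 (by norm_num)
    have hxx : x^2 < 1 := by nlinarith
    exact ((summable_geometric_of_lt_one (by positivity) hxx).mul_of_nonneg
      (summable_geometric_of_lt_one hx0 hx1)
      (fun _ => by positivity) (fun _ => by positivity)).mul_left A
  have hmaj : ∀ p : ℕ × ℕ, A * x ^ (2 * p.1 + p.2) = A * ((x^2) ^ p.1 * x ^ p.2) := by
    intro p
    rw [← pow_mul, ← pow_add]
  have hUsum : Summable U := by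
    apply Summable.of_norm
    apply Summable.of_nonneg_of_le (fun p => norm_nonneg _) hUnorm
    simpa only [hmaj] using hgeo
  -- iterated sums
  have hco : ∀ z : ℂ, ∀ j : ℕ, iteratedDeriv j (fun t => F (t, z)) t₀ = D2^[2*j] F (t₀, z) := by
    intro z j
    rw [hiter1 hF.1 j t₀ z, iter_heat hF j]
  have H1 : HasSum (fun j : ℕ => ((j.factorial : ℂ))⁻¹ * s ^ j * (D2^[2*j] F (t₀, z₀ + w)))
      (F (t₀ + s, z₀ + w)) := by
    have := Complex.hasSum_taylorSeries_of_entire (slice1_diff hF.1 (z₀ + w)) t₀ (t₀ + s)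
    simp only [add_sub_cancel_left, smul_eq_mul] at this
    convert this using 2 with j
    · rfl
    rw [hco (z₀ + w) j]
    ring
  have H2 : ∀ j : ℕ, HasSum (fun k : ℕ => ((k.factorial : ℂ))⁻¹ * w ^ k * c (2 * j + k))
      (D2^[2*j] F (t₀, z₀ + w)) := by
    intro j
    have hφ : Differentiable ℂ (fun z => D2^[2*j] F (t₀, z)) :=
      slice2_diff (D2_iter_analytic hF.1 (2*j)) t₀
    have := Complex.hasSum_taylorSeries_of_entire hφ z₀ (z₀ + w)
    simp only [add_sub_cancel_left, smul_eq_mul] at this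
    convert this using 2 with k
    · rfl
    rw [hiter2 (D2_iter_analytic hF.1 (2*j)) k t₀ z₀]
    rw [show D2^[k] (D2^[2*j] F) = D2^[k + 2*j] F from (Function.iterate_add_apply D2 k (2*j) F).symm]
    rw [show 2 * j + k = k + 2 * j from by omega]
    simp only [hc, cfun]
    ring
  have H3 : ∀ j : ℕ, HasSum (fun k => U (j, k))
      (((j.factorial : ℂ))⁻¹ * s ^ j * (D2^[2*j] F (t₀, z₀ + w))) := by
    intro j
    exact (H2 j).mul_left (((j.factorial : ℂ))⁻¹ * s ^ j)
  have H4 : HasSum U (F (t₀ + s, z₀ + w)) := by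
    obtain ⟨L, hL⟩ := hUsum
    have := hL.prod_fiberwise H3
    rwa [this.unique H1] at hL
  -- main term
  set V : ℕ × ℕ → ℂ := fun p => if 2 * p.1 + p.2 = d then
    ((p.1.factorial : ℂ))⁻¹ * s ^ p.1 * (((p.2.factorial : ℂ))⁻¹ * w ^ p.2 * c d) else 0 with hV
  have HV : HasSum V (c d * hpoly d s w) := by
    have hvanish : ∀ p : ℕ × ℕ,
        p ∉ (Finset.range (d/2+1)).image (fun j => (j, d - 2*j)) → V p = 0 := by
      rintro ⟨j, k⟩ hp
      by_contra hne
      have hdk : 2 * j + k = d := by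
        by_contra h
        exact hne (if_neg h)
      apply hp
      refine Finset.mem_image.mpr ⟨j, Finset.mem_range.mpr (by omega), ?_⟩
      have : d - 2 * j = k := by omega
      rw [this]
    have := hasSum_sum_of_ne_finset_zero (L := SummationFilter.unconditional (ℕ × ℕ)) hvanish
    convert this using 1
    rw [Finset.sum_image (fun a _ b _ h => by
      have := (Prod.mk.injEq _ _ _ _).mp h
      exact this.1)]
    rw [hpoly, Finset.mul_sum]
    refine Finset.sum_congr rfl fun j hj => ?_
    have hj2 : 2 * j ≤ d := by
      have := Finset.mem_range.mp hj; omega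
    rw [hV]
    simp only
    rw [if_pos (by omega : 2 * j + (d - 2 * j) = d)]
    ring
  have H5 : HasSum (fun p => U p - V p) (F (t₀ + s, z₀ + w) - c d * hpoly d s w) := H4.sub HV
  -- termwise bound
  set K : ℝ := A * 2 ^ (d+1) * x ^ (d+1) with hK
  have hK0 : 0 ≤ K := by positivity
  have hUV : ∀ p : ℕ × ℕ, ‖U p - V p‖ ≤ K * ((1/2:ℝ) ^ p.1 * (1/2) ^ p.2) := by
    rintro ⟨j, k⟩
    set n := 2 * j + k with hn
    rcases lt_trichotomy n d with hlt | heq | hgt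
    · have hU0 : U (j, k) = 0 := by
        simp only [hU]
        rw [hvan n hlt]
        ring
      have hV0 : V (j, k) = 0 := if_neg (by omega)
      rw [hU0, hV0, sub_zero, norm_zero]
      positivity
    · have : U (j, k) = V (j, k) := by
        simp only [hU, hV]
        rw [if_pos (show 2*j+k = d from heq), show 2*j+k = d from heq]
      rw [this, sub_self, norm_zero]
      positivity
    · have hV0 : V (j, k) = 0 := if_neg (by omega)
      rw [hV0, sub_zero]
      have key2 : (1/2:ℝ)^(n-(d+1)) = 2^(d+1) * (1/2)^n := by
        have h : (2:ℝ)^(d+1) * (1/2)^(d+1) = 1 := by rw [← mul_pow]; norm_num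
        have h2 : (1/2:ℝ)^n = (1/2)^(d+1) * (1/2)^(n-(d+1)) := by
          rw [← pow_add]; congr 1; omega
        rw [h2, ← mul_assoc, h, one_mul]
      have h3 : (1/2:ℝ)^n ≤ (1/2)^j * (1/2)^k := by
        rw [← pow_add]
        apply pow_le_pow_of_le_one (by norm_num) (by norm_num)
        omega
      calc ‖U (j, k)‖ ≤ A * x ^ n := hUnorm (j, k)
        _ = A * (x^(d+1) * x^(n-(d+1))) := by rw [← pow_add]; congr 2; omega
        _ ≤ A * (x^(d+1) * (1/2)^(n-(d+1))) := by
            have := pow_le_pow_left₀ hx0 hx2 (n-(d+1))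
            gcongr
        _ = K * (1/2:ℝ)^n := by rw [key2, hK]; ring
        _ ≤ K * ((1/2:ℝ)^j * (1/2)^k) := by
            exact mul_le_mul_of_nonneg_left h3 hK0
  have hhalf : HasSum (fun p : ℕ × ℕ => K * ((1/2:ℝ) ^ p.1 * (1/2) ^ p.2)) (K * 4) := by
    have hg : HasSum (fun n : ℕ => (1/2:ℝ)^n) 2 := by
      have := hasSum_geometric_of_lt_one (by norm_num : (0:ℝ) ≤ 1/2) (by norm_num)
      convert this using 1
      norm_num
    have hsummable : Summable (fun p : ℕ × ℕ => (1/2:ℝ)^p.1 * (1/2)^p.2) :=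
      hg.summable.mul_of_nonneg hg.summable (fun _ => by positivity) (fun _ => by positivity)
    have := hg.mul hg hsummable
    have h4 : (2:ℝ) * 2 = 4 := by norm_num
    rw [h4] at this
    exact this.mul_left K
  have hnormsum : Summable (fun p => ‖U p - V p‖) :=
    Summable.of_nonneg_of_le (fun p => norm_nonneg _) hUV hhalf.summable
  have step1 : ‖F (t₀ + s, z₀ + w) - c d * hpoly d s w‖ ≤ K * 4 := by
    rw [← H5.tsum_eq]
    calc ‖∑' p, (U p - V p)‖ ≤ ∑' p, ‖U p - V p‖ := norm_tsum_le_tsum_norm hnormsum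
      _ ≤ ∑' p : ℕ × ℕ, K * ((1/2:ℝ) ^ p.1 * (1/2) ^ p.2) :=
          Summable.tsum_le_tsum hUV hnormsum hhalf.summable
      _ = K * 4 := hhalf.tsum_eq
  calc ‖F (t₀ + s, z₀ + w) - c d * hpoly d s w‖ ≤ K * 4 := step1
    _ = A * 2^(d+1) * (2^(d+1) * ρ^(d+1)) * 4 := by
        rw [hK, hxdef, mul_pow]
    _ = A * 4 ^ (d + 2) * ρ ^ (d+1) := by
        have e4 : (4:ℝ)^(d+2) = 2^(d+1) * 2^(d+1) * 4 := by
          rw [show (4:ℝ) = 2 * 2 from by norm_num, mul_pow]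
          ring
        rw [e4]
        ring

lemma iteratedDeriv_zero_fun (n : ℕ) : iteratedDeriv n (fun _ : ℂ => (0:ℂ)) = fun _ => 0 := by
  induction n with
  | zero => exact iteratedDeriv_zero
  | succ n ih =>
    rw [iteratedDeriv_succ, ih]
    funext x
    simp

lemma all_zero {F : ℂ × ℂ → ℂ} (hF : IsEntireCaloric F) (t₀ z₀ : ℂ)
    (h : ∀ n, cfun F t₀ z₀ n = 0) : ∀ p : ℂ × ℂ, F p = 0 := by
  have hf : ∀ z, F (t₀, z) = 0 := by
    intro z
    have hs := Complex.hasSum_taylorSeries_of_entire (slice2_diff hF.1 t₀) z₀ z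
    have hterm : (fun n : ℕ => (n.factorial : ℂ)⁻¹ • (z - z₀) ^ n •
        iteratedDeriv n (fun w => F (t₀, w)) z₀) = fun _ => (0:ℂ) := by
      funext n
      rw [hiter2 hF.1 n t₀ z₀]
      have : D2^[n] F (t₀, z₀) = 0 := h n
      rw [this]
      simp
    rw [hterm] at hs
    exact (hs.unique hasSum_zero).symm ▸ (hs.unique hasSum_zero)
  have hzf : (fun w => F (t₀, w)) = fun _ => (0:ℂ) := funext hf
  have hD : ∀ n z, D2^[n] F (t₀, z) = 0 := by
    intro n z
    rw [← hiter2 hF.1 n t₀ z, hzf, iteratedDeriv_zero_fun]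
  rintro ⟨t, z⟩
  have hs := Complex.hasSum_taylorSeries_of_entire (slice1_diff hF.1 z) t₀ t
  have hterm : (fun j : ℕ => (j.factorial : ℂ)⁻¹ • (t - t₀) ^ j •
      iteratedDeriv j (fun s => F (s, z)) t₀) = fun _ => (0:ℂ) := by
    funext j
    rw [hiter1 hF.1 j t₀ z, iter_heat hF j, hD (2*j) z]
    simp
  rw [hterm] at hs
  exact hs.unique hasSum_zero

lemma key (F : ℂ × ℂ → ℂ) (hF : IsEntireCaloric F) (hne : ∃ p : ℂ × ℂ, F p ≠ 0)
    (t₀ z₀ : ℂ) (h0 : F (t₀, z₀) = 0) (h1 : deriv (fun w => F (t₀, w)) z₀ = 0) :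
    ∃ U : Set (ℂ × ℂ), IsOpen U ∧ (t₀, z₀) ∈ U ∧
      ∀ p ∈ U \ {(t₀, z₀)},
        0 < ‖F p‖ + ‖deriv (fun w => F (p.1, w)) p.2‖ := by
  classical
  set c : ℕ → ℂ := cfun F t₀ z₀ with hc
  have hex : ∃ n, c n ≠ 0 := by
    by_contra hcon
    push_neg at hcon
    obtain ⟨p, hp⟩ := hne
    exact hp (all_zero hF t₀ z₀ hcon p)
  obtain ⟨m, hcm, hvan⟩ : ∃ m, c m ≠ 0 ∧ ∀ n, n < m → c n = 0 :=
    ⟨Nat.find hex, Nat.find_spec hex, fun n hn => not_not.mp (Nat.find_min hex hn)⟩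
  have hc0 : c 0 = 0 := h0
  have hc1 : c 1 = 0 := by
    have : c 1 = D2 F (t₀, z₀) := rfl
    rw [this, ← sliceD2 hF.1 t₀ z₀]
    exact h1
  have hm2 : 2 ≤ m := by
    by_contra hcon
    interval_cases m
    · exact hcm hc0
    · exact hcm hc1
  obtain ⟨C₁, hC₁0, hC₁⟩ := main_est F hF t₀ z₀ m hvan
  have hvan' : ∀ n, n < m - 1 → cfun (D2 F) t₀ z₀ n = 0 := by
    intro n hn
    have : cfun (D2 F) t₀ z₀ n = c (n + 1) := by
      show D2^[n] (D2 F) (t₀, z₀) = D2^[n+1] F (t₀, z₀)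
      rw [Function.iterate_succ_apply]
    rw [this]
    exact hvan (n + 1) (by omega)
  obtain ⟨C₂, hC₂0, hC₂⟩ := main_est (D2 F) (caloric_D2 hF) t₀ z₀ (m - 1) hvan'
  have hcoef : cfun (D2 F) t₀ z₀ (m - 1) = c m := by
    show D2^[m-1] (D2 F) (t₀, z₀) = D2^[m] F (t₀, z₀)
    rw [← Function.iterate_succ_apply]
    rw [show (m-1).succ = m from by omega]
  rw [hcoef] at hC₂
  obtain ⟨δ, hδ0, hδ⟩ := hpoly_lower m (by omega)
  have hcm0 : 0 < ‖c m‖ := norm_pos_iff.mpr hcm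
  set ε : ℝ := min (1/4) (‖c m‖ * δ / (2 * (C₁ + C₂))) with hε
  have hε0 : 0 < ε := by
    apply lt_min (by norm_num)
    positivity
  refine ⟨Metric.ball t₀ (ε^2) ×ˢ Metric.ball z₀ ε,
    (Metric.isOpen_ball).prod (Metric.isOpen_ball),
    Set.mk_mem_prod (Metric.mem_ball_self (by positivity)) (Metric.mem_ball_self hε0), ?_⟩
  rintro p ⟨hpU, hpne⟩
  obtain ⟨hp1, hp2⟩ := hpU
  set s : ℂ := p.1 - t₀ with hs
  set w : ℂ := p.2 - z₀ with hw
  have hns : ‖s‖ < ε^2 := by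
    rw [hs]
    simpa [Complex.dist_eq] using hp1
  have hnw : ‖w‖ < ε := by
    rw [hw]
    simpa [Complex.dist_eq] using hp2
  have hρε : rho s w < ε := by
    apply max_lt _ hnw
    rw [show ε = Real.sqrt (ε^2) from (Real.sqrt_sq hε0.le).symm]
    exact Real.sqrt_lt_sqrt (norm_nonneg s) hns
  set ρ : ℝ := rho s w with hρ
  have hρ4 : ρ ≤ 1/4 := le_of_lt (lt_of_lt_of_le hρε (min_le_left _ _))
  have hsw : ¬(s = 0 ∧ w = 0) := by
    rintro ⟨hs0, hw0⟩
    apply hpne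
    have e1 : p.1 = t₀ := by
      have := sub_eq_zero.mp hs0; exact this
    have e2 : p.2 = z₀ := sub_eq_zero.mp hw0
    show p ∈ ({(t₀, z₀)} : Set (ℂ × ℂ))
    rw [Set.mem_singleton_iff, ← e1, ← e2]
  have hρ0 : 0 < ρ := rho_pos hsw
  have hpp : ((t₀ + s, z₀ + w) : ℂ × ℂ) = p := by
    refine Prod.ext ?_ ?_
    · show t₀ + s = p.1
      rw [hs]; ring
    · show z₀ + w = p.2
      rw [hw]; ring
  have hFp : F (t₀ + s, z₀ + w) = F p := by rw [hpp]
  have hF2p : D2 F (t₀ + s, z₀ + w) = D2 F p := by rw [hpp]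
  have E₁ : ‖F p - c m * hpoly m s w‖ ≤ C₁ * ρ^(m+1) := by
    rw [← hFp]; exact hC₁ s w hρ4
  have E₂ : ‖D2 F p - c m * hpoly (m-1) s w‖ ≤ C₂ * ρ^m := by
    rw [← hF2p]
    have := hC₂ s w hρ4
    have hexp : (m - 1) + 1 = m := by omega
    rwa [hexp] at this
  have hlow := hδ s w hsw
  rw [← hρ] at hlow
  set a : ℝ := ‖F p‖ with ha
  set b : ℝ := ‖D2 F p‖ with hb
  have ha1 : ‖c m‖ * ‖hpoly m s w‖ ≤ a + C₁ * ρ^(m+1) := by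
    calc ‖c m‖ * ‖hpoly m s w‖ = ‖c m * hpoly m s w‖ := (norm_mul _ _).symm
      _ = ‖F p - (F p - c m * hpoly m s w)‖ := by rw [sub_sub_cancel]
      _ ≤ ‖F p‖ + ‖F p - c m * hpoly m s w‖ := norm_sub_le _ _
      _ ≤ a + C₁ * ρ^(m+1) := by rw [ha]; linarith
  have hb1 : ‖c m‖ * ‖hpoly (m-1) s w‖ ≤ b + C₂ * ρ^m := by
    calc ‖c m‖ * ‖hpoly (m-1) s w‖ = ‖c m * hpoly (m-1) s w‖ := (norm_mul _ _).symm
      _ = ‖D2 F p - (D2 F p - c m * hpoly (m-1) s w)‖ := by rw [sub_sub_cancel]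
      _ ≤ ‖D2 F p‖ + ‖D2 F p - c m * hpoly (m-1) s w‖ := norm_sub_le _ _
      _ ≤ b + C₂ * ρ^m := by rw [hb]; linarith
  have hρsmall : ρ < ‖c m‖ * δ / (2 * (C₁ + C₂)) := lt_of_lt_of_le hρε (min_le_right _ _)
  have hCC : 0 < C₁ + C₂ := by linarith
  have hkey : (C₁ + C₂) * ρ ≤ ‖c m‖ * δ / 2 := by
    rw [lt_div_iff₀ (by linarith : (0:ℝ) < 2 * (C₁ + C₂))] at hρsmall
    nlinarith
  have hρm : 0 < ρ^m := pow_pos hρ0 m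
  have hρm1 : ρ^(m+1) = ρ^m * ρ := pow_succ ρ m
  have hmainlow : ‖c m‖ * (δ * ρ^m) ≤ ‖c m‖ * ‖hpoly m s w‖ + ρ * (‖c m‖ * ‖hpoly (m-1) s w‖) :=
    calc ‖c m‖ * (δ * ρ^m) ≤ ‖c m‖ * (‖hpoly m s w‖ + ρ * ‖hpoly (m-1) s w‖) :=
          mul_le_mul_of_nonneg_left hlow hcm0.le
      _ = ‖c m‖ * ‖hpoly m s w‖ + ρ * (‖c m‖ * ‖hpoly (m-1) s w‖) := by ring
  have hpos : 0 < a + ρ * b := by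
    have h2 : ρ * (‖c m‖ * ‖hpoly (m-1) s w‖) ≤ ρ * (b + C₂ * ρ^m) :=
      mul_le_mul_of_nonneg_left hb1 hρ0.le
    have h3 : ρ * (b + C₂ * ρ^m) = ρ * b + C₂ * ρ^(m+1) := by rw [hρm1]; ring
    have step : ‖c m‖ * (δ * ρ^m) ≤ a + ρ * b + (C₁ + C₂) * ρ^(m+1) := by
      linarith [ha1, h2, h3, hρm1, hmainlow]
    have step2 : (C₁ + C₂) * ρ^(m+1) ≤ (‖c m‖ * δ / 2) * ρ^m := by
      rw [hρm1]
      calc (C₁ + C₂) * (ρ^m * ρ) = ((C₁ + C₂) * ρ) * ρ^m := by ring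
        _ ≤ (‖c m‖ * δ / 2) * ρ^m := mul_le_mul_of_nonneg_right hkey hρm.le
    have hposX : 0 < (‖c m‖ * δ / 2) * ρ^m := by positivity
    have hrel : ‖c m‖ * (δ * ρ^m) = 2 * ((‖c m‖ * δ / 2) * ρ^m) := by ring
    linarith [step, step2, hposX, hrel]
  have hρ1 : ρ ≤ 1 := by linarith
  have hb0 : 0 ≤ b := norm_nonneg _
  have habs : 0 < a + b := by
    have : ρ * b ≤ 1 * b := mul_le_mul_of_nonneg_right hρ1 hb0
    linarith
  have hderiv : deriv (fun w => F (p.1, w)) p.2 = D2 F p := by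
    rw [sliceD2 hF.1 p.1 p.2]
  rw [hderiv]
  calc (0:ℝ) < a + b := habs
    _ = ‖F p‖ + ‖D2 F p‖ := by
        rw [ha, hb]

/-- If `F ≢ 0` is an entire caloric function and
`F(t*,z*) = ∂_z F(t*,z*) = 0`, then on some punctured neighborhood of `(t*,z*)` one has
`|F| + |∂_z F| > 0`; consequently the set `M_F` of multiple zeros of `F(t,·)` is a
discrete subset of `ℂ²`. -/
theorem multiple_zeros_isolated
    (F : ℂ × ℂ → ℂ) (hF : IsEntireCaloric F) (hne : ∃ p : ℂ × ℂ, F p ≠ 0)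
    (tast zast : ℂ)
    (h0 : F (tast, zast) = 0)
    (h1 : deriv (fun w => F (tast, w)) zast = 0) :
    (∃ U : Set (ℂ × ℂ), IsOpen U ∧ (tast, zast) ∈ U ∧
      ∀ p ∈ U \ {(tast, zast)},
        0 < ‖F p‖ + ‖deriv (fun w => F (p.1, w)) p.2‖) ∧
    DiscreteTopology
      ({p : ℂ × ℂ | F p = 0 ∧ deriv (fun w => F (p.1, w)) p.2 = 0} : Set (ℂ × ℂ)) := by
  refine ⟨key F hF hne tast zast h0 h1, ?_⟩
  rw [discreteTopology_iff_isOpen_singleton]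
  rintro ⟨p, hp⟩
  have hp0 : F (p.1, p.2) = 0 := by
    rw [show ((p.1, p.2) : ℂ × ℂ) = p from rfl]
    exact hp.1
  have hp1 : deriv (fun w => F (p.1, w)) p.2 = 0 := hp.2
  obtain ⟨U, hUopen, hUmem, hUpos⟩ := key F hF hne p.1 p.2 hp0 hp1
  rw [isOpen_induced_iff]
  refine ⟨U, hUopen, ?_⟩
  ext q
  simp only [Set.mem_preimage, Set.mem_singleton_iff]
  constructor
  · intro hq
    by_contra hqp
    have hqval : (q : ℂ × ℂ) ≠ (p.1, p.2) := by
      intro h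
      apply hqp
      apply Subtype.ext
      rw [h]
    have := hUpos q ⟨hq, hqval⟩
    have hq1 : ‖F (q : ℂ × ℂ)‖ = 0 := by
      rw [q.2.1]
      simp
    have hq2 : ‖deriv (fun w => F ((q : ℂ × ℂ).1, w)) (q : ℂ × ℂ).2‖ = 0 := by
      rw [q.2.2]
      simp
    rw [hq1, hq2] at this
    norm_num at this
  · rintro rfl
    exact hUmem
end

section
/- Let (z_k)_{k≥0} be a sequence of nonzero complex numbers with z₀ ≠ z_k for all k ≥ 1 and Σ_{k≥0} 1/|z_k| < ∞, let A ∈ ℂ and C ∈ ℂ with C ≠ 0, and define the entire function G(z) := C·e^{Az}·∏_{k≥0}(1 − z/z_k) (the infinite product converges locally uniformly by the summability hypothesis, and z₀ is a simple zero of G). Then G'(z₀) ≠ 0 and G''(z₀)/G'(z₀) = 2A + 2·Σ_{k≥1} 1/(z₀ − z_k), where the series on the right converges. -/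
open Filter

/-- Let `(z_k)` be nonzero complex numbers with `z₀ ≠ z_k` for `k ≥ 1` and
`Σ 1/|z_k| < ∞`, and let `G(z) = C e^{Az} ∏_{k≥0} (1 − z/z_k)` (genus-zero product), so that
`z₀` is a simple zero of `G`. Then `G'(z₀) ≠ 0`, the series `Σ_{k≥1} 1/(z₀ − z_k)` converges,
and `G''(z₀)/G'(z₀) = 2A + 2 Σ_{k≥1} 1/(z₀ − z_k)`. -/
theorem genus_zero_product_second_log_deriv
    (z : ℕ → ℂ) (hz : ∀ k, z k ≠ 0) (hsimple : ∀ k : ℕ, 1 ≤ k → z 0 ≠ z k)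
    (hsum : Summable fun k : ℕ => ‖z k‖⁻¹)
    (A C : ℂ) (hC : C ≠ 0)
    (G : ℂ → ℂ)
    (hG : ∀ w : ℂ, G w = C * Complex.exp (A * w) * ∏' k : ℕ, (1 - w / z k)) :
    deriv G (z 0) ≠ 0 ∧
    (Summable fun k : ℕ => (z 0 - z (k + 1))⁻¹) ∧
    iteratedDeriv 2 G (z 0) / deriv G (z 0) =
      2 * A + 2 * ∑' k : ℕ, (z 0 - z (k + 1))⁻¹ := by
  have hz0 : z 0 ≠ 0 := hz 0
  set R : ℝ := ‖z 0‖ + 1 with hRdef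
  have hR1 : 1 ≤ R := by
    have := norm_nonneg (z 0); simp [hRdef]
  -- a cutoff beyond which all |z k| are at least 2R
  obtain ⟨M, hM⟩ : ∃ M : ℕ, ∀ k, 2 * R ≤ ‖z (k + (M + 1))‖ := by
    have h0 := hsum.tendsto_atTop_zero
    have h1 : ∀ᶠ k in atTop, (‖z k‖)⁻¹ < (2 * R)⁻¹ :=
      h0.eventually (gt_mem_nhds (by positivity))
    obtain ⟨N, hN⟩ := eventually_atTop.mp h1
    refine ⟨N, fun k => ?_⟩
    have habs : 0 < ‖z (k + (N + 1))‖ := norm_pos_iff.mpr (hz _)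
    by_contra hcon
    push_neg at hcon
    have h2 := one_div_lt_one_div_of_lt habs hcon
    rw [one_div, one_div] at h2
    have := hN (k + (N + 1)) (by omega)
    linarith
  -- the ball around z 0 on which we work
  set s : Set ℂ := Metric.ball (z 0) 1 with hsdef
  have hsopen : IsOpen s := hsdef ▸ Metric.isOpen_ball
  have hz0s : z 0 ∈ s := Metric.mem_ball_self one_pos
  have hws : ∀ w ∈ s, ‖w‖ ≤ R := by
    intro w hw
    have h1 : ‖w - z 0‖ < 1 := by
      simpa [hsdef, Complex.dist_eq] using hw
    calc ‖w‖ = ‖(w - z 0) + z 0‖ := by ring_nf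
    _ ≤ ‖w - z 0‖ + ‖z 0‖ := norm_add_le _ _
    _ ≤ R := by rw [hRdef]; linarith
  have hfrac : ∀ w ∈ s, ∀ k : ℕ, ‖w / z (k + (M + 1))‖ ≤ 1 / 2 := by
    intro w hw k
    rw [norm_div]
    have h1 := hM k
    have h2 := hws w hw
    have habs : 0 < ‖z (k + (M + 1))‖ := norm_pos_iff.mpr (hz _)
    rw [div_le_iff₀ habs]
    nlinarith
  have hne : ∀ w ∈ s, ∀ k : ℕ, (1 : ℂ) - w / z (k + (M + 1)) ≠ 0 := by
    intro w hw k h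
    have h2 := hfrac w hw k
    have hx : w / z (k + (M + 1)) = 1 := by linear_combination -h
    rw [hx] at h2
    simp at h2
    linarith
  have hhalf : ∀ w ∈ s, ∀ k : ℕ, (1 : ℝ) / 2 ≤ ‖1 - w / z (k + (M + 1))‖ := by
    intro w hw k
    have h2 := hfrac w hw k
    have h3 : ‖(1 : ℂ)‖ - ‖w / z (k + (M + 1))‖
        ≤ ‖1 - w / z (k + (M + 1))‖ := by
      simpa using norm_sub_norm_le (1 : ℂ) (w / z (k + (M + 1)))
    simp only [norm_one] at h3
    linarith
  have hslit : ∀ w ∈ s, ∀ k : ℕ, (1 - w / z (k + (M + 1))) ∈ Complex.slitPlane := by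
    intro w hw k
    rw [Complex.mem_slitPlane_iff]
    left
    have hre : (w / z (k + (M + 1))).re ≤ ‖w / z (k + (M + 1))‖ :=
      Complex.re_le_norm _
    have h2 := hfrac w hw k
    simp only [Complex.sub_re, Complex.one_re]
    linarith
  -- the log series and its termwise derivative
  set gl : ℕ → ℂ → ℂ := fun k w => Complex.log (1 - w / z (k + (M + 1))) with hgl
  set gl' : ℕ → ℂ → ℂ := fun k w => -(z (k + (M + 1)))⁻¹ / (1 - w / z (k + (M + 1))) with hgl'
  set u : ℕ → ℝ := fun k => 2 * (‖z (k + (M + 1))‖)⁻¹ with hu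
  have hu_sum : Summable u := ((summable_nat_add_iff (M + 1)).mpr hsum).mul_left 2
  have hlin : ∀ (c : ℂ) (y : ℂ), HasDerivAt (fun w : ℂ => 1 - w / c) (-c⁻¹) y := by
    intro c y
    simpa [one_div] using ((hasDerivAt_id y).div_const c).const_sub 1
  have hgd : ∀ (k : ℕ), ∀ w ∈ s, HasDerivAt (gl k) (gl' k w) w := by
    intro k w hw
    exact (hlin (z (k + (M + 1))) w).clog (hslit w hw k)
  have hgb : ∀ (k : ℕ), ∀ w ∈ s, ‖gl' k w‖ ≤ u k := by
    intro k w hw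
    have habs : 0 < ‖z (k + (M + 1))‖ := norm_pos_iff.mpr (hz _)
    have hh := hhalf w hw k
    simp only [hgl', hu, norm_div, norm_neg, norm_inv]
    rw [div_le_iff₀ (by linarith)]
    have hpos : (0:ℝ) < (‖z (k + (M + 1))‖)⁻¹ := by positivity
    nlinarith
  have hgs : ∀ w ∈ s, Summable fun k => gl k w := by
    intro w hw
    apply Summable.of_norm_bounded (g := fun k => 3 / 2 * (R * (‖z (k + (M + 1))‖)⁻¹))
      ((((summable_nat_add_iff (M + 1)).mpr hsum).mul_left R).mul_left (3 / 2))
    intro k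
    have h2 := hfrac w hw k
    have hlog : ‖Complex.log (1 + -(w / z (k + (M + 1))))‖ ≤ 3 / 2 * ‖-(w / z (k + (M + 1)))‖ :=
      Complex.norm_log_one_add_half_le_self (by simpa using h2)
    have harr : (1 : ℂ) + -(w / z (k + (M + 1))) = 1 - w / z (k + (M + 1)) := by ring
    rw [harr, norm_neg] at hlog
    refine hlog.trans ?_
    have habs : 0 < ‖z (k + (M + 1))‖ := norm_pos_iff.mpr (hz _)
    have h3 := hws w hw
    rw [norm_div]
    have hpos : (0:ℝ) ≤ (‖z (k + (M + 1))‖)⁻¹ := by positivity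
    have h4 : ‖w‖ / ‖z (k + (M + 1))‖
        ≤ R * (‖z (k + (M + 1))‖)⁻¹ := by
      rw [div_eq_mul_inv]; exact mul_le_mul_of_nonneg_right h3 hpos
    linarith
  -- the series of logs is differentiable with termwise derivative
  set Lsum : ℂ → ℂ := fun w => ∑' k, gl k w with hLsum
  set L1 : ℂ → ℂ := fun w => ∑' k, gl' k w with hL1
  have hLd : ∀ y ∈ s, HasDerivAt Lsum (L1 y) y := by
    intro y hy
    refine hasDerivAt_tsum_of_isPreconnected hu_sum ?_ ?_
      (fun n y hy => hgd n y hy) (fun n y hy => hgb n y hy) hz0s (hgs _ hz0s) hy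
    · rw [hsdef]; exact Metric.isOpen_ball
    · rw [hsdef]; exact (convex_ball _ _).isPreconnected
  -- the tail product equals the exponential of the log series
  have hQ : ∀ w ∈ s, HasProd (fun k => 1 - w / z (k + (M + 1))) (Complex.exp (Lsum w)) := by
    intro w hw
    have h1 : HasProd (fun k => Complex.exp (gl k w)) (Complex.exp (Lsum w)) :=
      (hgs w hw).hasSum.cexp
    have hfe : (fun k => Complex.exp (gl k w)) = fun k => 1 - w / z (k + (M + 1)) :=
      funext fun k => Complex.exp_log (hne w hw k)
    rwa [hfe] at h1
  -- the factorization G = (1 - w / z 0) * H on s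
  set H : ℂ → ℂ := fun w => C * Complex.exp (A * w) *
      ((∏ k ∈ Finset.range M, (1 - w / z (k + 1))) * Complex.exp (Lsum w)) with hH
  have hGs : ∀ w ∈ s, G w = (1 - w / z 0) * H w := by
    intro w hw
    have h2 : HasProd (fun n => 1 - w / z n)
        ((∏ i ∈ Finset.range (M + 1), (1 - w / z i)) * Complex.exp (Lsum w)) :=
      HasProd.prod_range_mul (hQ w hw)
    rw [hG w, h2.tprod_eq, Finset.prod_range_succ', hH]
    ring
  have hHdAt : ∀ y ∈ s, DifferentiableAt ℂ H y := by
    intro y hy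
    have e1 : DifferentiableAt ℂ (fun w : ℂ => Complex.exp (A * w)) y :=
      (((hasDerivAt_id y).const_mul A).cexp).differentiableAt
    have e2 : DifferentiableAt ℂ (fun w : ℂ => ∏ k ∈ Finset.range M, (1 - w / z (k + 1))) y :=
      (HasDerivAt.fun_finsetProd (fun i _ => hlin (z (i + 1)) y)).differentiableAt
    have e3 : DifferentiableAt ℂ (fun w => Complex.exp (Lsum w)) y :=
      ((hLd y hy).cexp).differentiableAt
    exact (e1.const_mul C).mul (e2.mul e3)
  have hHdo : DifferentiableOn ℂ H s := fun y hy => (hHdAt y hy).differentiableWithinAt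
  have hHan : AnalyticOnNhd ℂ H s := hHdo.analyticOnNhd hsopen
  have hdHd : DifferentiableAt ℂ (deriv H) (z 0) := (hHan.deriv (z 0) hz0s).differentiableAt
  have hGderiv : ∀ y ∈ s, deriv G y = -(z 0)⁻¹ * H y + (1 - y / z 0) * deriv H y := by
    intro y hy
    have hev : G =ᶠ[nhds y] fun w => (1 - w / z 0) * H w :=
      Filter.eventuallyEq_of_mem (hsopen.mem_nhds hy) hGs
    rw [hev.deriv_eq]
    exact ((hlin (z 0) y).mul (hHdAt y hy).hasDerivAt).deriv
  have hfactor : ∀ k : ℕ, (1 : ℂ) - z 0 / z (k + 1) ≠ 0 := by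
    intro k hkz
    have hdd : z 0 / z (k + 1) = 1 := by linear_combination -hkz
    exact hsimple (k + 1) (Nat.le_add_left 1 k) ((div_eq_one_iff_eq (hz (k + 1))).mp hdd)
  have hHz0 : H (z 0) ≠ 0 := by
    rw [hH]
    exact mul_ne_zero (mul_ne_zero hC (Complex.exp_ne_zero _))
      (mul_ne_zero (Finset.prod_ne_zero_iff.mpr fun k _ => hfactor k) (Complex.exp_ne_zero _))
  have hderivGz0 : deriv G (z 0) = -(z 0)⁻¹ * H (z 0) := by
    rw [hGderiv _ hz0s, div_self hz0]; ring
  have hG'ne : deriv G (z 0) ≠ 0 := by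
    rw [hderivGz0]
    exact mul_ne_zero (neg_ne_zero.mpr (inv_ne_zero hz0)) hHz0
  -- second derivative of G at z 0
  have hderivGev : deriv G =ᶠ[nhds (z 0)]
      fun y => -(z 0)⁻¹ * H y + (1 - y / z 0) * deriv H y :=
    Filter.eventuallyEq_of_mem (hsopen.mem_nhds hz0s) hGderiv
  have h2d : deriv (deriv G) (z 0) = -2 * (z 0)⁻¹ * deriv H (z 0) := by
    rw [hderivGev.deriv_eq]
    have t1 : HasDerivAt (fun y => -(z 0)⁻¹ * H y) (-(z 0)⁻¹ * deriv H (z 0)) (z 0) :=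
      ((hHdAt _ hz0s).hasDerivAt).const_mul _
    have t2 : HasDerivAt (fun y => (1 - y / z 0) * deriv H y)
        (-(z 0)⁻¹ * deriv H (z 0) + (1 - z 0 / z 0) * deriv (deriv H) (z 0)) (z 0) :=
      (hlin (z 0) _).mul hdHd.hasDerivAt
    rw [(t1.fun_add t2).deriv, div_self hz0]
    ring
  have hit2 : iteratedDeriv 2 G (z 0) = deriv (deriv G) (z 0) := by
    rw [show (2 : ℕ) = 1 + 1 from rfl, iteratedDeriv_succ, iteratedDeriv_one]
  -- logarithmic derivative of H at z 0
  have hE : HasDerivAt (fun w : ℂ => Complex.exp (A * w)) (Complex.exp (A * z 0) * A) (z 0) := by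
    simpa using ((hasDerivAt_id (z 0)).const_mul A).cexp
  have piece1 : logDeriv (fun w => C * Complex.exp (A * w)) (z 0) = A := by
    rw [logDeriv_const_mul _ _ hC, logDeriv_apply, hE.deriv]
    exact mul_div_cancel_left₀ _ (Complex.exp_ne_zero _)
  have piece2 : logDeriv (fun w => ∏ k ∈ Finset.range M, (1 - w / z (k + 1))) (z 0)
      = ∑ k ∈ Finset.range M, (z 0 - z (k + 1))⁻¹ := by
    rw [logDeriv_prod (s := Finset.range M) (f := fun i w => 1 - w / z (i + 1)) (x := z 0)
      (fun i _ => hfactor i)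
      (fun i _ => ((hlin (z (i + 1)) (z 0))).differentiableAt)]
    refine Finset.sum_congr rfl fun k _ => ?_
    rw [logDeriv_apply, (hlin (z (k + 1)) (z 0)).deriv]
    have hb := hz (k + 1)
    have hrw : (1 : ℂ) - z 0 / z (k + 1) = (z (k + 1) - z 0) / z (k + 1) := by
      field_simp
    rw [hrw, div_div_eq_mul_div, neg_mul, inv_mul_cancel₀ hb, neg_div, one_div,
      ← inv_neg, neg_sub]
  have piece3 : logDeriv (fun w => Complex.exp (Lsum w)) (z 0) = L1 (z 0) := by
    rw [logDeriv_apply, ((hLd _ hz0s).cexp).deriv]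
    exact mul_div_cancel_left₀ _ (Complex.exp_ne_zero _)
  have hlogH : logDeriv H (z 0)
      = A + ((∑ k ∈ Finset.range M, (z 0 - z (k + 1))⁻¹) + L1 (z 0)) := by
    have hP0 : (∏ k ∈ Finset.range M, (1 - z 0 / z (k + 1))) ≠ 0 :=
      Finset.prod_ne_zero_iff.mpr fun k _ => hfactor k
    have d1 : DifferentiableAt ℂ (fun w : ℂ => C * Complex.exp (A * w)) (z 0) :=
      hE.differentiableAt.const_mul C
    have d2 : DifferentiableAt ℂ (fun w : ℂ => ∏ k ∈ Finset.range M, (1 - w / z (k + 1)))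
        (z 0) := (HasDerivAt.fun_finsetProd (fun i _ => hlin (z (i + 1)) (z 0))).differentiableAt
    have d3 : DifferentiableAt ℂ (fun w => Complex.exp (Lsum w)) (z 0) :=
      ((hLd _ hz0s).cexp).differentiableAt
    rw [hH]
    rw [logDeriv_mul (f := fun w => C * Complex.exp (A * w))
      (g := fun w => (∏ k ∈ Finset.range M, (1 - w / z (k + 1))) * Complex.exp (Lsum w))
      (z 0) (mul_ne_zero hC (Complex.exp_ne_zero _))
      (mul_ne_zero hP0 (Complex.exp_ne_zero _)) d1 (d2.mul d3)]
    rw [logDeriv_mul (f := fun w => ∏ k ∈ Finset.range M, (1 - w / z (k + 1)))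
      (g := fun w => Complex.exp (Lsum w))
      (z 0) hP0 (Complex.exp_ne_zero _) d2 d3]
    rw [piece1, piece2, piece3]
  have hdH : deriv H (z 0) = (A + ((∑ k ∈ Finset.range M, (z 0 - z (k + 1))⁻¹) + L1 (z 0)))
      * H (z 0) := by
    rw [← hlogH, logDeriv_apply, div_mul_cancel₀ _ hHz0]
  -- summability of the full series of reciprocals
  have hzj_ne : ∀ k : ℕ, z 0 - z (k + (M + 1)) ≠ 0 := by
    intro k hsub
    have h1 := hM k
    have h2 : ‖z 0‖ = ‖z (k + (M + 1))‖ := by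
      rw [sub_eq_zero] at hsub; rw [hsub]
    rw [hRdef] at h1
    rw [h2] at h1
    linarith
  have htail : Summable (fun k : ℕ => (z 0 - z (k + (M + 1)))⁻¹) := by
    apply Summable.of_norm_bounded (g := u) hu_sum
    intro k
    have h1 := hM k
    have habs : 0 < ‖z (k + (M + 1))‖ := norm_pos_iff.mpr (hz _)
    have h2 : ‖z 0‖ ≤ R := by rw [hRdef]; linarith
    have h3 : ‖z (k + (M + 1))‖ / 2 ≤ ‖z 0 - z (k + (M + 1))‖ := by
      have h4 : ‖z (k + (M + 1))‖ - ‖z 0‖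
          ≤ ‖z (k + (M + 1)) - z 0‖ := by
        simpa using norm_sub_norm_le (z (k + (M + 1))) (z 0)
      have h5 : ‖z (k + (M + 1)) - z 0‖ = ‖z 0 - z (k + (M + 1))‖ := by
        rw [← neg_sub, norm_neg]
      linarith
    rw [norm_inv, hu]
    calc (‖z 0 - z (k + (M + 1))‖)⁻¹
        ≤ (‖z (k + (M + 1))‖ / 2)⁻¹ := by
          apply inv_anti₀ (by positivity) h3
      _ = 2 * (‖z (k + (M + 1))‖)⁻¹ := by
          rw [inv_div]; ring
  have hS : Summable (fun k : ℕ => (z 0 - z (k + 1))⁻¹) := by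
    apply (summable_nat_add_iff M).mp
    exact htail
  have htsum : ∑' k : ℕ, (z 0 - z (k + 1))⁻¹
      = (∑ k ∈ Finset.range M, (z 0 - z (k + 1))⁻¹) + ∑' k : ℕ, (z 0 - z (k + (M + 1)))⁻¹ := by
    rw [← Summable.sum_add_tsum_nat_add M hS]
    rfl
  have hL1z0 : L1 (z 0) = ∑' k : ℕ, (z 0 - z (k + (M + 1)))⁻¹ := by
    rw [hL1]
    apply tsum_congr
    intro k
    have hb := hz (k + (M + 1))
    have hrw : (1 : ℂ) - z 0 / z (k + (M + 1))
        = (z (k + (M + 1)) - z 0) / z (k + (M + 1)) := by field_simp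
    rw [hgl']
    simp only
    rw [hrw, div_div_eq_mul_div, neg_mul, inv_mul_cancel₀ hb, neg_div, one_div,
      ← inv_neg, neg_sub]
  -- conclusion
  refine ⟨hG'ne, hS, ?_⟩
  have hden : -(z 0)⁻¹ * H (z 0) ≠ 0 :=
    mul_ne_zero (neg_ne_zero.mpr (inv_ne_zero hz0)) hHz0
  rw [hit2, h2d, hderivGz0, hdH, htsum, hL1z0, div_eq_iff hden]
  ring
end

section
/- Let F, G : ℂ × ℂ → ℂ be entire caloric functions and suppose that for some fixed t₀ ∈ ℂ one has F(t₀, z) = G(t₀, z) for all z ∈ ℂ. Then F(t,z) = G(t,z) for all (t,z) ∈ ℂ². In particular, if F(t₀, z) = 0 for all z ∈ ℂ for some fixed t₀, then F is identically zero. -/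
open Filter

noncomputable def pdv (v : ℂ × ℂ) (K : ℂ × ℂ → ℂ) : ℂ × ℂ → ℂ := fun p => fderiv ℂ K p v

lemma pdv_analytic (v : ℂ × ℂ) {K : ℂ × ℂ → ℂ} (hK : AnalyticOnNhd ℂ K Set.univ) :
    AnalyticOnNhd ℂ (pdv v K) Set.univ := fun p hp =>
  ((ContinuousLinearMap.apply ℂ ℂ v).analyticAt _).comp (hK.fderiv p hp)

lemma deriv_slice2 {K : ℂ × ℂ → ℂ} {t z : ℂ} (hK : DifferentiableAt ℂ K (t, z)) :
    deriv (fun w => K (t, w)) z = pdv (0, 1) K (t, z) := by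
  have h1 : HasFDerivAt (fun w : ℂ => ((t, w) : ℂ × ℂ))
      ((0 : ℂ →L[ℂ] ℂ).prod (ContinuousLinearMap.id ℂ ℂ)) z :=
    HasFDerivAt.prodMk (hasFDerivAt_const t z) (hasFDerivAt_id z)
  have h3 := (hK.hasFDerivAt.comp z h1).hasDerivAt.deriv
  simp only [Function.comp_def] at h3
  rw [h3]; simp [pdv]

lemma deriv_slice1 {K : ℂ × ℂ → ℂ} {t z : ℂ} (hK : DifferentiableAt ℂ K (t, z)) :
    deriv (fun s => K (s, z)) t = pdv (1, 0) K (t, z) := by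
  have h1 : HasFDerivAt (fun s : ℂ => ((s, z) : ℂ × ℂ))
      ((ContinuousLinearMap.id ℂ ℂ).prod (0 : ℂ →L[ℂ] ℂ)) t :=
    HasFDerivAt.prodMk (hasFDerivAt_id t) (hasFDerivAt_const z t)
  have h3 := (hK.hasFDerivAt.comp t h1).hasDerivAt.deriv
  simp only [Function.comp_def] at h3
  rw [h3]; simp [pdv]

lemma pdv_fderiv {K : ℂ × ℂ → ℂ} (hK : AnalyticOnNhd ℂ K Set.univ) (w : ℂ × ℂ) (p : ℂ × ℂ) :
    HasFDerivAt (pdv w K)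
      ((ContinuousLinearMap.apply ℂ ℂ w).comp (fderiv ℂ (fderiv ℂ K) p)) p :=
  ((ContinuousLinearMap.apply ℂ ℂ w).hasFDerivAt).comp p
    ((hK.fderiv p trivial).differentiableAt).hasFDerivAt

lemma pdv_comm {K : ℂ × ℂ → ℂ} (hK : AnalyticOnNhd ℂ K Set.univ) (u v : ℂ × ℂ) (p : ℂ × ℂ) :
    pdv u (pdv v K) p = pdv v (pdv u K) p := by
  have sym : IsSymmSndFDerivAt ℂ K p :=
    ((hK p trivial).contDiffAt (n := 2)).isSymmSndFDerivAt (by simp [minSmoothness_of_isRCLikeNormedField])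
  have e1 : pdv u (pdv v K) p = fderiv ℂ (fderiv ℂ K) p u v := by
    show fderiv ℂ (pdv v K) p u = _
    rw [(pdv_fderiv hK v p).fderiv]; rfl
  have e2 : pdv v (pdv u K) p = fderiv ℂ (fderiv ℂ K) p v u := by
    show fderiv ℂ (pdv u K) p v = _
    rw [(pdv_fderiv hK u p).fderiv]; rfl
  rw [e1, e2, sym.eq]

/-- The "pd form" of being entire caloric. -/
def Cal (K : ℂ × ℂ → ℂ) : Prop :=
  AnalyticOnNhd ℂ K Set.univ ∧ ∀ p, pdv (1, 0) K p = pdv (0, 1) (pdv (0, 1) K) p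

lemma cal_of_isEntireCaloric {K : ℂ × ℂ → ℂ} (h : IsEntireCaloric K) : Cal K := by
  obtain ⟨hA, hH⟩ := h
  refine ⟨hA, fun p => ?_⟩
  obtain ⟨t, z⟩ := p
  have hd : ∀ q : ℂ × ℂ, DifferentiableAt ℂ K q := fun q => (hA q trivial).differentiableAt
  have h1 : deriv (fun s => K (s, z)) t = pdv (1, 0) K (t, z) := deriv_slice1 (hd _)
  have h2 : iteratedDeriv 2 (fun w => K (t, w)) z = pdv (0, 1) (pdv (0, 1) K) (t, z) := by
    rw [show (2 : ℕ) = 1 + 1 from rfl, iteratedDeriv_succ, iteratedDeriv_one]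
    have : deriv (fun w => K (t, w)) = fun w => pdv (0, 1) K (t, w) :=
      funext fun w => deriv_slice2 (hd _)
    rw [this]
    exact deriv_slice2 ((pdv_analytic _ hA _ trivial).differentiableAt)
  rw [← h1, ← h2, hH]

lemma cal_pdv2 {K : ℂ × ℂ → ℂ} (h : Cal K) : Cal (pdv (0, 1) K) := by
  obtain ⟨hA, hH⟩ := h
  refine ⟨pdv_analytic _ hA, fun p => ?_⟩
  have h1 : pdv (1, 0) (pdv (0, 1) K) p = pdv (0, 1) (pdv (1, 0) K) p := pdv_comm hA _ _ p
  have h2 : pdv (0, 1) (pdv (1, 0) K) p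
      = pdv (0, 1) (pdv (0, 1) (pdv (0, 1) K)) p := by
    have : pdv (1, 0) K = pdv (0, 1) (pdv (0, 1) K) := funext hH
    rw [this]
  rw [h1, h2]

lemma cal_pdv2_iter {K : ℂ × ℂ → ℂ} (h : Cal K) (n : ℕ) : Cal ((pdv (0, 1))^[n] K) := by
  induction n with
  | zero => exact h
  | succ n ih => rw [Function.iterate_succ_apply']; exact cal_pdv2 ih

lemma key_iteratedDeriv {K : ℂ × ℂ → ℂ} (h : Cal K) (n : ℕ) (t z : ℂ) :
    iteratedDeriv n (fun s => K (s, z)) t = ((pdv (0, 1))^[2 * n] K) (t, z) := by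
  induction n generalizing K with
  | zero => simp
  | succ n ih =>
    obtain ⟨hA, hH⟩ := h
    rw [iteratedDeriv_succ']
    have e : deriv (fun s => K (s, z)) = fun s => (pdv (0, 1) (pdv (0, 1) K)) (s, z) := by
      funext s
      rw [deriv_slice1 (hA _ trivial).differentiableAt, hH]
    rw [e]
    have hcal2 : Cal (pdv (0, 1) (pdv (0, 1) K)) := cal_pdv2 (cal_pdv2 ⟨hA, hH⟩)
    have := ih hcal2
    rw [this]
    rw [show 2 * (n + 1) = 2 * n + 2 by ring, Function.iterate_add_apply]
    rfl

lemma slice_zero_iter {K : ℂ × ℂ → ℂ} (hA : AnalyticOnNhd ℂ K Set.univ) {t₀ : ℂ}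
    (h0 : ∀ z, K (t₀, z) = 0) (m : ℕ) : ∀ z, ((pdv (0, 1))^[m] K) (t₀, z) = 0 := by
  induction m with
  | zero => exact h0
  | succ m ih =>
    intro z
    rw [Function.iterate_succ_apply']
    have hAm : AnalyticOnNhd ℂ ((pdv (0, 1))^[m] K) Set.univ := by
      clear ih
      induction m with
      | zero => exact hA
      | succ m ih2 => rw [Function.iterate_succ_apply']; exact pdv_analytic _ ih2
    rw [← deriv_slice2 (hAm _ trivial).differentiableAt]
    have : (fun w => ((pdv (0, 1))^[m] K) (t₀, w)) = fun _ => (0 : ℂ) := funext ih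
    rw [this, deriv_const]

/-- One-variable entire function with all derivatives vanishing at a point is zero. -/
lemma entire_zero_of_derivs_zero {g : ℂ → ℂ} (hg : AnalyticOnNhd ℂ g Set.univ) {t₀ : ℂ}
    (h : ∀ n, iteratedDeriv n g t₀ = 0) : ∀ t, g t = 0 := by
  obtain ⟨p, r, hp⟩ := hg t₀ trivial
  have hp0 : ∀ n, p n = 0 := by
    intro n
    have h1 : (Nat.factorial n : ℂ) • p n (fun _ => (1 : ℂ)) = iteratedFDeriv ℂ n g t₀ (fun _ => 1) := by
      have := hp.factorial_smul (1 : ℂ) n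
      rwa [← Nat.cast_smul_eq_nsmul ℂ] at this
    rw [← iteratedDeriv_eq_iteratedFDeriv, h n, smul_eq_zero] at h1
    have h2 : p n (fun _ => (1 : ℂ)) = 0 := by
      rcases h1 with h1 | h1
      · exact absurd h1 (by exact_mod_cast Nat.factorial_ne_zero n)
      · exact h1
    refine ContinuousMultilinearMap.ext fun m => ?_
    have : (fun i => m i • (1 : ℂ)) = m := by funext i; simp
    calc p n m = p n (fun i => m i • (1 : ℂ)) := by rw [this]
      _ = (∏ i, m i) • p n (fun _ => (1 : ℂ)) := (p n).map_smul_univ m fun _ => 1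
      _ = 0 := by rw [h2, smul_zero]
  have hp' : HasFPowerSeriesAt g (0 : FormalMultilinearSeries ℂ ℂ ℂ) t₀ := by
    refine ⟨r, ?_⟩
    have : p = 0 := FormalMultilinearSeries.ext hp0
    rwa [this] at hp
  have hev : g =ᶠ[nhds t₀] 0 := hp'.eventually_eq_zero
  intro t
  have := hg.eqOn_zero_of_preconnected_of_eventuallyEq_zero
    (isPreconnected_univ) (Set.mem_univ t₀) hev
  exact this (Set.mem_univ t)

/-- Two entire caloric functions agreeing at some fixed time `t₀` (for all
`z`) agree everywhere. -/
theorem caloric_unique_from_time_slice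
    (F G : ℂ × ℂ → ℂ) (hF : IsEntireCaloric F) (hG : IsEntireCaloric G)
    (t₀ : ℂ) (h : ∀ z : ℂ, F (t₀, z) = G (t₀, z)) :
    ∀ t z : ℂ, F (t, z) = G (t, z) := by
  have hFc := cal_of_isEntireCaloric hF
  have hGc := cal_of_isEntireCaloric hG
  set H : ℂ × ℂ → ℂ := fun p => F p - G p with hHdef
  have hHA : AnalyticOnNhd ℂ H Set.univ := hFc.1.sub hGc.1
  have hHc : Cal H := by
    refine ⟨hHA, fun p => ?_⟩
    have hdF : ∀ q : ℂ × ℂ, DifferentiableAt ℂ F q := fun q => (hFc.1 q trivial).differentiableAt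
    have hdG : ∀ q : ℂ × ℂ, DifferentiableAt ℂ G q := fun q => (hGc.1 q trivial).differentiableAt
    have e1 : ∀ (v : ℂ × ℂ) q, pdv v H q = pdv v F q - pdv v G q := by
      intro v q
      show fderiv ℂ H q v = fderiv ℂ F q v - fderiv ℂ G q v
      rw [hHdef, fderiv_fun_sub (hdF q) (hdG q)]; rfl
    have e2 : pdv (0, 1) H = fun q => pdv (0, 1) F q - pdv (0, 1) G q := funext (e1 _)
    have e3 : ∀ q, pdv (0, 1) (pdv (0, 1) H) q
        = pdv (0, 1) (pdv (0, 1) F) q - pdv (0, 1) (pdv (0, 1) G) q := by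
      intro q
      rw [e2]
      show fderiv ℂ (fun q => pdv (0,1) F q - pdv (0,1) G q) q (0,1) = _
      rw [fderiv_fun_sub ((pdv_analytic _ hFc.1) q trivial).differentiableAt
        ((pdv_analytic _ hGc.1) q trivial).differentiableAt]
      rfl
    rw [e1, e3, hFc.2, hGc.2]
  have hH0 : ∀ z, H (t₀, z) = 0 := fun z => by simp [hHdef, h z]
  intro t z
  have hslice : AnalyticOnNhd ℂ (fun s => H (s, z)) Set.univ := by
    intro s _
    exact AnalyticAt.comp (f := fun s : ℂ => ((s, z) : ℂ × ℂ)) (hHA (s, z) trivial)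
      ((analyticAt_id).prod analyticAt_const)
  have hders : ∀ n, iteratedDeriv n (fun s => H (s, z)) t₀ = 0 := by
    intro n
    rw [key_iteratedDeriv hHc n t₀ z]
    exact slice_zero_iter hHA hH0 (2 * n) z
  have := entire_zero_of_derivs_zero hslice hders t
  have h2 : F (t, z) - G (t, z) = 0 := this
  exact sub_eq_zero.mp h2
end
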